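/- arXiv:1702.06422 — 8 statements merged into one kernel-verified Lean document; each statement's English description precedes it below -/
import Mathlib

section
/- For all n ≥ 1 and p ≥ 0, the p-Bernoulli numbers satisfy ∑_{k=0}^{n} C(n+1, k) B_{k,p} = -p · B_{n,p}. -/
/-- The p-Bernoulli numbers, defined by the three-term recurrence
`B_{n+1,p} = p·B_{n,p} - ((p+1)²/(p+2))·B_{n,p+1}` with `B_{0,p} = 1`. -/
def pBernoulli : ℕ → ℕ → ℚ
  | 0, _ => 1
  | n + 1, p => p * pBernoulli n p - ((p + 1 : ℚ) ^ 2 / (p + 2)) * pBernoulli n (p + 1)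

lemma pBernoulli_zero (p : ℕ) : pBernoulli 0 p = 1 := rfl

lemma pBernoulli_succ (n p : ℕ) :
    pBernoulli (n + 1) p
      = p * pBernoulli n p - ((p + 1 : ℚ) ^ 2 / (p + 2)) * pBernoulli n (p + 1) := rfl

lemma pBernoulli_aux (n : ℕ) (hn : 1 ≤ n) : ∀ p : ℕ,
    ∑ k ∈ Finset.range (n + 2), ((n + 1).choose k : ℚ) * pBernoulli k p
      = -((p + 1 : ℚ) ^ 2 / (p + 2)) * pBernoulli n (p + 1) := by
  induction n, hn using Nat.le_induction with
  | base =>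
    intro p
    have h2 : ((p : ℚ) + 2) ≠ 0 := by positivity
    have h3 : ((p : ℚ) + 3) ≠ 0 := by positivity
    simp [Finset.sum_range_succ, pBernoulli_succ, pBernoulli_zero]
    field_simp
    ring
  | succ n hn ih =>
    intro p
    have key : ∑ k ∈ Finset.range (n + 3), ((n + 2).choose k : ℚ) * pBernoulli k p
        = (1 + (p : ℚ)) * (∑ k ∈ Finset.range (n + 2), ((n + 1).choose k : ℚ) * pBernoulli k p)
          - ((p + 1 : ℚ) ^ 2 / (p + 2)) *
            (∑ k ∈ Finset.range (n + 2), ((n + 1).choose k : ℚ) * pBernoulli k (p + 1)) := by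
      rw [Finset.sum_range_succ' (fun k => ((n + 2).choose k : ℚ) * pBernoulli k p)]
      have hsplit : ∀ k, ((n + 2).choose (k + 1) : ℚ) * pBernoulli (k + 1) p
          = ((n + 1).choose k : ℚ) * pBernoulli (k + 1) p
            + ((n + 1).choose (k + 1) : ℚ) * pBernoulli (k + 1) p := by
        intro k
        rw [Nat.choose_succ_succ]
        push_cast
        ring
      simp only [hsplit, Finset.sum_add_distrib]
      have hrec : ∀ k, ((n + 1).choose k : ℚ) * pBernoulli (k + 1) p
          = (p : ℚ) * (((n + 1).choose k : ℚ) * pBernoulli k p)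
            - ((p + 1 : ℚ) ^ 2 / (p + 2)) * (((n + 1).choose k : ℚ) * pBernoulli k (p + 1)) := by
        intro k
        rw [pBernoulli_succ]
        ring
      simp only [hrec, Finset.sum_sub_distrib, ← Finset.mul_sum]
      have htail : ∑ k ∈ Finset.range (n + 2), ((n + 1).choose (k + 1) : ℚ) * pBernoulli (k + 1) p
          + ((n + 2).choose 0 : ℚ) * pBernoulli 0 p
          = ∑ k ∈ Finset.range (n + 2), ((n + 1).choose k : ℚ) * pBernoulli k p := by
        rw [Finset.sum_range_succ' (fun k => ((n + 1).choose k : ℚ) * pBernoulli k p)]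
        rw [Finset.sum_range_succ (fun k => ((n + 1).choose (k + 1) : ℚ) * pBernoulli (k + 1) p)]
        simp [Nat.choose_succ_self]
      linarith [htail]
    rw [key, ih p, ih (p + 1)]
    rw [pBernoulli_succ n (p + 1)]
    have h2 : ((p : ℚ) + 2) ≠ 0 := by positivity
    have h3 : ((p : ℚ) + 3) ≠ 0 := by positivity
    push_cast
    field_simp
    ring

theorem pBernoulli_recurrence (n p : ℕ) (hn : 1 ≤ n) :
    ∑ k ∈ Finset.range (n + 1), ((n + 1).choose k : ℚ) * pBernoulli k p
      = -(p : ℚ) * pBernoulli n p := by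
  have h := pBernoulli_aux n hn p
  rw [Finset.sum_range_succ] at h
  rw [Nat.choose_self] at h
  have hrec := pBernoulli_succ n p
  have : ∑ k ∈ Finset.range (n + 1), ((n + 1).choose k : ℚ) * pBernoulli k p
      = -((p + 1 : ℚ) ^ 2 / (p + 2)) * pBernoulli n (p + 1) - pBernoulli (n + 1) p := by
    push_cast at h ⊢
    linarith
  rw [this, hrec]
  ring
end

section
/- For all non-negative integers n and p, ∫_{-1}^{0} (1+y)^p · w_n(y) dy = B_{n,p}/(p+1), where w_n is the n-th geometric polynomial. -/
def stirling2 : ℕ → ℕ → ℕ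
  | 0, 0 => 1
  | 0, _ + 1 => 0
  | _ + 1, 0 => 0
  | n + 1, k + 1 => (k + 1) * stirling2 n (k + 1) + stirling2 n k

/-- The geometric polynomials `w_n(y) = ∑_{k=0}^n S(n,k)·k!·y^k`. -/
def geomPoly (n : ℕ) (y : ℝ) : ℝ :=
  ∑ k ∈ Finset.range (n + 1), (stirling2 n k : ℝ) * (Nat.factorial k : ℝ) * y ^ k

lemma stirling2_eq_zero_of_lt : ∀ {n k : ℕ}, n < k → stirling2 n k = 0 := by
  intro n
  induction n with
  | zero =>
    intro k h
    match k, h with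
    | k + 1, _ => rfl
  | succ n ih =>
    intro k h
    match k, h with
    | k + 1, h =>
      have h1 : n < k + 1 := by omega
      have h2 : n < k := by omega
      simp [stirling2, ih h1, ih h2]

lemma int_aux : ∀ p k : ℕ, (∫ y in (-1:ℝ)..0, (1+y)^p * y^k)
    = (-1)^k * (Nat.factorial p) * (Nat.factorial k) / (Nat.factorial (p+k+1)) := by
  intro p
  induction p with
  | zero =>
    intro k
    simp only [pow_zero, one_mul, Nat.zero_add, Nat.factorial]
    rw [integral_pow]
    have hk : ((k:ℝ) + 1) ≠ 0 := by positivity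
    have hkf : ((Nat.factorial k : ℝ)) ≠ 0 := by positivity
    push_cast
    rw [zero_pow (by omega : k + 1 ≠ 0), pow_succ]
    field_simp
    ring
  | succ p ih =>
    intro k
    have h1 : ∀ y ∈ Set.uIcc (-1:ℝ) 0, (1+y)^(p+1) * y^k = (1+y)^p*y^k + (1+y)^p*y^(k+1) := by
      intro y _; ring
    rw [intervalIntegral.integral_congr h1, intervalIntegral.integral_add
      (Continuous.intervalIntegrable (by continuity) _ _)
      (Continuous.intervalIntegrable (by continuity) _ _),
      ih k, ih (k+1)]
    have e1 : p + 1 + k + 1 = (p + k + 1) + 1 := by omega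
    have e2 : p + (k+1) + 1 = (p + k + 1) + 1 := by omega
    rw [e1, e2, Nat.factorial_succ (p+k+1), Nat.factorial_succ k, Nat.factorial_succ p]
    have h2 : ((Nat.factorial (p+k+1) : ℝ)) ≠ 0 := by positivity
    push_cast
    field_simp
    ring

lemma key (n : ℕ) : ∀ p : ℕ, ∑ k ∈ Finset.range (n+1),
    (stirling2 n k : ℚ) * (Nat.factorial k : ℚ)^2 * (-1)^k * (Nat.factorial p : ℚ)
      / (Nat.factorial (p+k+1) : ℚ)
    = pBernoulli n p / (p+1) := by
  induction n with
  | zero =>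
    intro p
    rw [Finset.sum_range_one]
    have h2 : ((Nat.factorial p : ℚ)) ≠ 0 := by positivity
    simp only [stirling2, pBernoulli, Nat.factorial, Nat.add_zero, Nat.factorial_succ]
    push_cast
    field_simp
  | succ n ih =>
    intro p
    rw [Finset.sum_range_succ']
    have h0 : (stirling2 (n+1) 0 : ℚ) = 0 := by simp [stirling2]
    rw [h0]
    simp only [zero_mul, mul_zero, zero_div, add_zero]
    have hsplit : ∀ k ∈ Finset.range (n+1),
        (stirling2 (n+1) (k+1) : ℚ) * (Nat.factorial (k+1) : ℚ)^2 * (-1)^(k+1)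
          * (Nat.factorial p : ℚ) / (Nat.factorial (p+(k+1)+1) : ℚ)
        = ((k+1 : ℚ) * (stirling2 n (k+1) : ℚ)) * (Nat.factorial (k+1) : ℚ)^2 * (-1)^(k+1)
          * (Nat.factorial p : ℚ) / (Nat.factorial (p+(k+1)+1) : ℚ)
        + (stirling2 n k : ℚ) * (Nat.factorial (k+1) : ℚ)^2 * (-1)^(k+1)
          * (Nat.factorial p : ℚ) / (Nat.factorial (p+k+2) : ℚ) := by
      intro k _
      have hs : (stirling2 (n+1) (k+1) : ℚ)
          = (k+1 : ℚ) * (stirling2 n (k+1) : ℚ) + (stirling2 n k : ℚ) := by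
        rw [show stirling2 (n+1) (k+1) = (k+1) * stirling2 n (k+1) + stirling2 n k from rfl]
        push_cast; ring
      rw [hs, show p+(k+1)+1 = p+k+2 from by omega]
      ring
    rw [Finset.sum_congr rfl hsplit, Finset.sum_add_distrib]
    have hA : (∑ k ∈ Finset.range (n+1),
        ((k+1 : ℚ) * (stirling2 n (k+1) : ℚ)) * (Nat.factorial (k+1) : ℚ)^2 * (-1)^(k+1)
          * (Nat.factorial p : ℚ) / (Nat.factorial (p+(k+1)+1) : ℚ))
        = ∑ k ∈ Finset.range (n+1),
        ((k : ℚ) * (stirling2 n k : ℚ)) * (Nat.factorial k : ℚ)^2 * (-1)^k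
          * (Nat.factorial p : ℚ) / (Nat.factorial (p+k+1) : ℚ) := by
      have h1 := Finset.sum_range_succ' (fun k => ((k : ℚ) * (stirling2 n k : ℚ))
        * (Nat.factorial k : ℚ)^2 * (-1)^k * (Nat.factorial p : ℚ)
        / (Nat.factorial (p+k+1) : ℚ)) (n+1)
      have h2 := Finset.sum_range_succ (fun k => ((k : ℚ) * (stirling2 n k : ℚ))
        * (Nat.factorial k : ℚ)^2 * (-1)^k * (Nat.factorial p : ℚ)
        / (Nat.factorial (p+k+1) : ℚ)) (n+1)
      have hz : (stirling2 n (n+1) : ℚ) = 0 := by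
        rw [stirling2_eq_zero_of_lt (by omega)]; norm_num
      simp only [hz, Nat.cast_zero, zero_mul, mul_zero, zero_div, add_zero,
        zero_add] at h1 h2
      calc (∑ k ∈ Finset.range (n+1),
          ((k+1 : ℚ) * (stirling2 n (k+1) : ℚ)) * (Nat.factorial (k+1) : ℚ)^2 * (-1)^(k+1)
            * (Nat.factorial p : ℚ) / (Nat.factorial (p+(k+1)+1) : ℚ))
          = ∑ k ∈ Finset.range (n+1),
            (((k+1 : ℕ) : ℚ) * (stirling2 n (k+1) : ℚ)) * (Nat.factorial (k+1) : ℚ)^2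
              * (-1)^(k+1) * (Nat.factorial p : ℚ) / (Nat.factorial (p+(k+1)+1) : ℚ) := by
            apply Finset.sum_congr rfl
            intro k _
            push_cast
            ring
        _ = ∑ k ∈ Finset.range (n+1), ((k : ℚ) * (stirling2 n k : ℚ))
              * (Nat.factorial k : ℚ)^2 * (-1)^k * (Nat.factorial p : ℚ)
              / (Nat.factorial (p+k+1) : ℚ) := by rw [← h1, h2]
    rw [hA]
    rw [show pBernoulli (n+1) p
        = p * pBernoulli n p - ((p + 1 : ℚ) ^ 2 / (p + 2)) * pBernoulli n (p+1) from rfl]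
    have hp1 : ((p:ℚ) + 1) ≠ 0 := by positivity
    have hp2 : ((p:ℚ) + 2) ≠ 0 := by positivity
    have e1 : pBernoulli n p = ((p:ℚ)+1) * ∑ k ∈ Finset.range (n+1),
        (stirling2 n k : ℚ) * (Nat.factorial k : ℚ)^2 * (-1)^k * (Nat.factorial p : ℚ)
          / (Nat.factorial (p+k+1) : ℚ) := by
      rw [ih p]; field_simp
    have e2 : pBernoulli n (p+1) = ((p:ℚ)+2) * ∑ k ∈ Finset.range (n+1),
        (stirling2 n k : ℚ) * (Nat.factorial k : ℚ)^2 * (-1)^k * (Nat.factorial (p+1) : ℚ)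
          / (Nat.factorial (p+1+k+1) : ℚ) := by
      rw [ih (p+1)]
      push_cast
      field_simp
      ring
    rw [e1, e2]
    have hmain : (∑ k ∈ Finset.range (n+1),
          ((k : ℚ) * (stirling2 n k : ℚ)) * (Nat.factorial k : ℚ)^2 * (-1)^k
            * (Nat.factorial p : ℚ) / (Nat.factorial (p+k+1) : ℚ))
        + (∑ k ∈ Finset.range (n+1),
          (stirling2 n k : ℚ) * (Nat.factorial (k+1) : ℚ)^2 * (-1)^(k+1)
            * (Nat.factorial p : ℚ) / (Nat.factorial (p+k+2) : ℚ))
        = ∑ k ∈ Finset.range (n+1),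
          ((p:ℚ) * ((stirling2 n k : ℚ) * (Nat.factorial k : ℚ)^2 * (-1)^k
              * (Nat.factorial p : ℚ) / (Nat.factorial (p+k+1) : ℚ))
           - ((p:ℚ)+1) * ((stirling2 n k : ℚ) * (Nat.factorial k : ℚ)^2 * (-1)^k
              * (Nat.factorial (p+1) : ℚ) / (Nat.factorial (p+1+k+1) : ℚ))) := by
      rw [← Finset.sum_add_distrib]
      apply Finset.sum_congr rfl
      intro k _
      have e3 : p+1+k+1 = (p+k+1)+1 := by omega
      have e4 : p+k+2 = (p+k+1)+1 := by omega
      rw [e3, e4, Nat.factorial_succ (p+k+1), Nat.factorial_succ k, Nat.factorial_succ p]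
      have h2 : ((Nat.factorial (p+k+1) : ℚ)) ≠ 0 := by positivity
      have h3 : ((Nat.factorial k : ℚ)) ≠ 0 := by positivity
      push_cast
      field_simp
      ring
    rw [hmain, Finset.sum_sub_distrib, ← Finset.mul_sum, ← Finset.mul_sum]
    generalize (∑ k ∈ Finset.range (n+1),
        (stirling2 n k : ℚ) * (Nat.factorial k : ℚ)^2 * (-1)^k * (Nat.factorial p : ℚ)
          / (Nat.factorial (p+k+1) : ℚ)) = X
    generalize (∑ k ∈ Finset.range (n+1),
        (stirling2 n k : ℚ) * (Nat.factorial k : ℚ)^2 * (-1)^k * (Nat.factorial (p+1) : ℚ)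
          / (Nat.factorial (p+1+k+1) : ℚ)) = Y
    field_simp

theorem integral_geomPoly_mul_pow (n p : ℕ) :
    ∫ y in (-1 : ℝ)..0, (1 + y) ^ p * geomPoly n y = (pBernoulli n p : ℝ) / (p + 1) := by
  have hcong : ∀ y ∈ Set.uIcc (-1:ℝ) 0, (1 + y) ^ p * geomPoly n y
      = ∑ k ∈ Finset.range (n+1),
        (stirling2 n k : ℝ) * (Nat.factorial k : ℝ) * ((1+y)^p * y^k) := by
    intro y _
    rw [geomPoly, Finset.mul_sum]
    apply Finset.sum_congr rfl
    intro k _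
    ring
  rw [intervalIntegral.integral_congr hcong]
  rw [intervalIntegral.integral_finset_sum (fun k _ =>
    Continuous.intervalIntegrable (by continuity) _ _)]
  simp only [intervalIntegral.integral_const_mul, int_aux]
  have hr : (∑ k ∈ Finset.range (n+1),
      (stirling2 n k : ℝ) * (Nat.factorial k : ℝ)^2 * (-1)^k * (Nat.factorial p : ℝ)
        / (Nat.factorial (p+k+1) : ℝ))
      = (pBernoulli n p : ℝ) / ((p:ℝ) + 1) := by
    exact_mod_cast congrArg (fun q : ℚ => (q : ℝ)) (key n p)
  rw [← hr]
  apply Finset.sum_congr rfl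
  intro k _
  ring
end

section
/- For n ≥ 0, ∫_{-1}^{0} w_n(y) dy = B_n, the n-th Bernoulli number (with B_1 = -1/2). -/
lemma stirling2_eq_zero : ∀ n k, n < k → stirling2 n k = 0 := by
  intro n
  induction n with
  | zero =>
    intro k hk
    cases k with
    | zero => omega
    | succ k => rfl
  | succ n ih =>
    intro k hk
    cases k with
    | zero => omega
    | succ k =>
      show (k + 1) * stirling2 n (k + 1) + stirling2 n k = 0
      rw [ih (k + 1) (by omega), ih k (by omega)]
      ring

lemma stirling2_succ (n k : ℕ) :
    stirling2 (n + 1) (k + 1) = (k + 1) * stirling2 n (k + 1) + stirling2 n k := rfl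

lemma stirling2_zero_right (n : ℕ) : stirling2 (n + 1) 0 = 0 := rfl

lemma stirling2_zero_left : ∀ k, stirling2 0 (k + 1) = 0 := fun _ => rfl

/-- `∑_{i=0}^{n} C(n,i) S(i,k) = S(n+1,k+1)`. -/
lemma stirling2_choose_sum (n : ℕ) :
    ∀ k, ∑ i ∈ Finset.range (n + 1), n.choose i * stirling2 i k
      = stirling2 (n + 1) (k + 1) := by
  induction n with
  | zero =>
    intro k
    rw [Finset.sum_range_one, stirling2_succ]
    simp [stirling2_zero_left k]
  | succ n ih =>
    intro k
    rw [Finset.sum_range_succ']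
    have hsplit : ∀ i, (n + 1).choose (i + 1) * stirling2 (i + 1) k
        = n.choose i * stirling2 (i + 1) k + n.choose (i + 1) * stirling2 (i + 1) k := by
      intro i
      rw [Nat.choose_succ_succ]
      ring
    simp only [hsplit]
    rw [Finset.sum_add_distrib]
    have h2 : ∑ i ∈ Finset.range (n + 1), n.choose (i + 1) * stirling2 (i + 1) k
          + n.choose 0 * stirling2 0 k = stirling2 (n + 1) (k + 1) := by
      have h := ih k
      rw [Finset.sum_range_succ'] at h
      rw [Finset.sum_range_succ, Nat.choose_succ_self, Nat.zero_mul, Nat.add_zero]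
      exact h
    cases k with
    | zero =>
      have hz : ∀ i ∈ Finset.range (n + 1), n.choose i * stirling2 (i + 1) 0 = 0 := by
        intro i _
        rw [stirling2_zero_right, Nat.mul_zero]
      rw [Finset.sum_congr rfl hz, Finset.sum_const_zero]
      have e1 : stirling2 (n + 1 + 1) (0 + 1) = 1 * stirling2 (n + 1) 1 + stirling2 (n + 1) 0 := rfl
      have e2 : stirling2 (n + 1) 0 = 0 := rfl
      have e3 : stirling2 0 0 = 1 := rfl
      have e4 : stirling2 (n + 1) (0 + 1) = stirling2 (n + 1) 1 := rfl
      simp only [Nat.choose_zero_right, one_mul, e3, e4, Nat.mul_one] at h2 ⊢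
      omega
    | succ j =>
      have hst : ∀ i ∈ Finset.range (n + 1),
          n.choose i * stirling2 (i + 1) (j + 1)
            = (j + 1) * (n.choose i * stirling2 i (j + 1)) + n.choose i * stirling2 i j := by
        intro i _
        rw [stirling2_succ]
        ring
      rw [Finset.sum_congr rfl hst, Finset.sum_add_distrib, ← Finset.mul_sum, ih (j + 1), ih j]
      have hz0 : stirling2 0 (j + 1) = 0 := stirling2_zero_left j
      rw [hz0] at h2 ⊢
      simp only [Nat.choose_zero_right, Nat.mul_zero, Nat.add_zero, one_mul] at h2 ⊢
      have e1 : stirling2 (n + 1 + 1) (j + 1 + 1)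
          = (j + 2) * stirling2 (n + 1) (j + 2) + stirling2 (n + 1) (j + 1) := rfl
      have e2 : (j + 2) * stirling2 (n + 1) (j + 2)
          = (j + 1) * stirling2 (n + 1) (j + 2) + stirling2 (n + 1) (j + 2) := by ring
      have e3 : stirling2 (n + 1) (j + 1 + 1) = stirling2 (n + 1) (j + 2) := rfl
      simp only [e3] at h2 ⊢
      omega

/-- The telescoping identity `∑_k (-1)^k k! S(n, k+1) = [n = 1]`. -/
lemma V_eq (n : ℕ) :
    ∑ k ∈ Finset.range (n + 1), (-1 : ℚ) ^ k * (Nat.factorial k) * stirling2 n (k + 1)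
      = if n = 1 then 1 else 0 := by
  cases n with
  | zero => simp [stirling2_zero_left]
  | succ m =>
    have hterm : ∀ k, (-1 : ℚ) ^ k * (Nat.factorial k) * stirling2 (m + 1) (k + 1)
        = ((-1 : ℚ) ^ k * (Nat.factorial (k + 1)) * stirling2 m (k + 1))
          + ((-1 : ℚ) ^ k * (Nat.factorial k) * stirling2 m k) := by
      intro k
      rw [stirling2_succ]
      push_cast
      rw [Nat.factorial_succ]
      push_cast
      ring
    simp only [hterm]
    rw [Finset.sum_add_distrib]
    have hg : ∑ k ∈ Finset.range (m + 2), (-1 : ℚ) ^ k * (Nat.factorial k) * stirling2 m k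
        = (∑ k ∈ Finset.range (m + 1),
            (-1 : ℚ) ^ (k + 1) * (Nat.factorial (k + 1)) * stirling2 m (k + 1))
          + (-1 : ℚ) ^ 0 * (Nat.factorial 0) * stirling2 m 0 := by
      rw [Finset.sum_range_succ']
    have hf : ∑ k ∈ Finset.range (m + 2), (-1 : ℚ) ^ k * (Nat.factorial (k + 1)) * stirling2 m (k + 1)
        = (∑ k ∈ Finset.range (m + 1), (-1 : ℚ) ^ k * (Nat.factorial (k + 1)) * stirling2 m (k + 1))
          + (-1 : ℚ) ^ (m + 1) * (Nat.factorial (m + 2)) * stirling2 m (m + 2) := by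
      rw [Finset.sum_range_succ]
    rw [hf, hg, stirling2_eq_zero m (m + 2) (by omega)]
    have hcancel : ∀ k, (-1 : ℚ) ^ (k + 1) * (Nat.factorial (k + 1)) * stirling2 m (k + 1)
        = -((-1 : ℚ) ^ k * (Nat.factorial (k + 1)) * stirling2 m (k + 1)) := by
      intro k; ring
    simp only [hcancel, Finset.sum_neg_distrib]
    cases m with
    | zero => norm_num [stirling2]
    | succ p =>
      rw [stirling2_zero_right]
      norm_num

/-- The rational number `A n = ∑_k S(n,k) k! (-1)^k / (k+1)`. -/
def Aq (n : ℕ) : ℚ :=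
  ∑ k ∈ Finset.range (n + 1),
    (stirling2 n k : ℚ) * (Nat.factorial k) * (-1) ^ k / (k + 1)

lemma T_eq (n : ℕ) :
    ∑ i ∈ Finset.range n, (n.choose i : ℚ) * Aq i = if n = 1 then 1 else 0 := by
  cases n with
  | zero => simp
  | succ m =>
    -- extend each inner sum from range (i+1) to range (m+1)
    have hA : ∀ i ∈ Finset.range (m + 1), (↑((m + 1).choose i) : ℚ) * Aq i
        = ∑ k ∈ Finset.range (m + 1),
            (↑((m + 1).choose i) : ℚ)
              * ((stirling2 i k : ℚ) * (Nat.factorial k) * (-1) ^ k / (k + 1)) := by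
      intro i hi
      rw [Finset.mem_range] at hi
      unfold Aq
      rw [Finset.mul_sum]
      apply Finset.sum_subset
      · intro x hx
        rw [Finset.mem_range] at *
        omega
      · intro x hx hx2
        rw [Finset.mem_range] at *
        rw [stirling2_eq_zero i x (by omega)]
        simp
    rw [Finset.sum_congr rfl hA, Finset.sum_comm]
    have hinner : ∀ k ∈ Finset.range (m + 1),
        ∑ i ∈ Finset.range (m + 1),
          (↑((m + 1).choose i) : ℚ)
            * ((stirling2 i k : ℚ) * (Nat.factorial k) * (-1) ^ k / (k + 1))
        = (-1 : ℚ) ^ k * (Nat.factorial k) * stirling2 (m + 1) (k + 1) := by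
      intro k hk
      have hfold : ∀ i, (↑((m + 1).choose i) : ℚ)
            * ((stirling2 i k : ℚ) * (Nat.factorial k) * (-1) ^ k / (k + 1))
          = (↑((m + 1).choose i * stirling2 i k) : ℚ)
            * ((Nat.factorial k) * (-1) ^ k / (k + 1)) := by
        intro i
        push_cast
        ring
      simp only [hfold]
      rw [← Finset.sum_mul, ← Nat.cast_sum]
      have hsum : ∑ i ∈ Finset.range (m + 1), (m + 1).choose i * stirling2 i k
            + stirling2 (m + 1) k = stirling2 (m + 1 + 1) (k + 1) := by
        have h := stirling2_choose_sum (m + 1) k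
        rw [Finset.sum_range_succ, Nat.choose_self, one_mul] at h
        exact h
      have hrec : stirling2 (m + 1 + 1) (k + 1)
          = (k + 1) * stirling2 (m + 1) (k + 1) + stirling2 (m + 1) k := rfl
      have hval : ∑ i ∈ Finset.range (m + 1), (m + 1).choose i * stirling2 i k
          = (k + 1) * stirling2 (m + 1) (k + 1) := by omega
      rw [hval]
      push_cast
      have hk1 : ((k : ℚ) + 1) ≠ 0 := by positivity
      field_simp
    rw [Finset.sum_congr rfl hinner]
    have hV := V_eq (m + 1)
    rw [Finset.sum_range_succ, stirling2_eq_zero (m + 1) (m + 1 + 1) (by omega)] at hV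
    norm_num at hV ⊢
    convert hV using 2

lemma Aq_eq_bernoulli : ∀ n, Aq n = bernoulli n := by
  intro n
  induction n using Nat.strong_induction_on with
  | _ n ih =>
    cases n with
    | zero =>
      show Aq 0 = bernoulli 0
      simp [Aq, stirling2]
    | succ m =>
      have hT := T_eq (m + 2)
      have hB := sum_bernoulli (m + 2)
      rw [if_neg (by omega)] at hT hB
      rw [Finset.sum_range_succ] at hT hB
      have hIH : ∑ i ∈ Finset.range (m + 1), ((m + 2).choose i : ℚ) * Aq i
          = ∑ i ∈ Finset.range (m + 1), ((m + 2).choose i : ℚ) * bernoulli i := by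
        apply Finset.sum_congr rfl
        intro i hi
        rw [Finset.mem_range] at hi
        rw [ih i (by omega)]
      rw [hIH] at hT
      have hchoose : ((m + 2).choose (m + 1) : ℚ) = (m + 2 : ℚ) := by
        rw [Nat.choose_succ_self_right]
        push_cast
        ring
      rw [hchoose] at hT hB
      have hne : ((m : ℚ) + 2) ≠ 0 := by positivity
      have : (m + 2 : ℚ) * Aq (m + 1) = (m + 2 : ℚ) * bernoulli (m + 1) := by
        linarith
      exact mul_left_cancel₀ hne this

theorem integral_geomPoly (n : ℕ) :
    ∫ y in (-1 : ℝ)..0, geomPoly n y = (bernoulli n : ℝ) := by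
  have hint : ∫ y in (-1 : ℝ)..0, geomPoly n y
      = ∑ k ∈ Finset.range (n + 1),
          (stirling2 n k : ℝ) * (Nat.factorial k : ℝ) * ((-1 : ℝ) ^ k / (k + 1)) := by
    unfold geomPoly
    rw [intervalIntegral.integral_finset_sum]
    · apply Finset.sum_congr rfl
      intro k hk
      rw [intervalIntegral.integral_const_mul]
      open intervalIntegral in rw [integral_pow]
      congr 1
      rw [zero_pow (by omega)]
      have : -(-1 : ℝ) ^ (k + 1) = (-1 : ℝ) ^ k := by
        rw [pow_succ]
        ring
      rw [zero_sub, this]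
    · intro k hk
      apply Continuous.intervalIntegrable
      fun_prop
  rw [hint, ← Aq_eq_bernoulli n]
  unfold Aq
  push_cast
  apply Finset.sum_congr rfl
  intro k hk
  ring
end

section
/- For n > 0, the geometric polynomial satisfies the reflection formula (y+1)·w_n(y) = (-1)^n · y · w_n(-y-1) as an identity of polynomials in y. -/
/-- Formal derivative of geomPoly in y. -/
noncomputable def gd (n : ℕ) (y : ℝ) : ℝ :=
  ∑ k ∈ Finset.range (n + 1),
    (stirling2 n k : ℝ) * (Nat.factorial k : ℝ) * ((k : ℝ) * y ^ (k - 1))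

lemma geomPoly_hasDerivAt (n : ℕ) (y : ℝ) :
    HasDerivAt (fun x => geomPoly n x) (gd n y) y := by
  unfold geomPoly gd
  apply HasDerivAt.fun_sum
  intro k hk
  exact (hasDerivAt_pow k y).const_mul ((stirling2 n k : ℝ) * (Nat.factorial k : ℝ))

lemma y_mul_gd (n : ℕ) (y : ℝ) :
    y * gd n y = ∑ k ∈ Finset.range (n + 1),
      (stirling2 n k : ℝ) * (Nat.factorial k : ℝ) * ((k : ℝ) * y ^ k) := by
  unfold gd
  rw [Finset.mul_sum]
  apply Finset.sum_congr rfl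
  intro k _
  cases k with
  | zero => simp
  | succ j =>
    simp only [Nat.add_sub_cancel, pow_succ]
    ring

lemma geomPoly_succ (n : ℕ) (y : ℝ) :
    geomPoly (n + 1) y = y * (1 + y) * gd n y + y * geomPoly n y := by
  have hT := y_mul_gd n y
  unfold geomPoly
  rw [Finset.sum_range_succ']
  have h0 : (stirling2 (n + 1) 0 : ℝ) = 0 := by norm_num [stirling2]
  rw [h0]
  have hrec : ∀ i, (stirling2 (n + 1) (i + 1) : ℝ)
      = (i + 1) * stirling2 n (i + 1) + stirling2 n i := by
    intro i
    show ((((i : ℕ) + 1) * stirling2 n (i + 1) + stirling2 n i : ℕ) : ℝ) = _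
    push_cast
    ring
  have hsplit : ∑ i ∈ Finset.range (n + 1),
      (stirling2 (n + 1) (i + 1) : ℝ) * (Nat.factorial (i + 1) : ℝ) * y ^ (i + 1)
      = (∑ i ∈ Finset.range (n + 1),
          ((i : ℝ) + 1) * (stirling2 n (i + 1) : ℝ) * (Nat.factorial (i + 1) : ℝ) * y ^ (i + 1))
        + (∑ i ∈ Finset.range (n + 1),
          (stirling2 n i : ℝ) * (Nat.factorial (i + 1) : ℝ) * y ^ (i + 1)) := by
    rw [← Finset.sum_add_distrib]
    apply Finset.sum_congr rfl
    intro i _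
    rw [hrec i]
    ring
  rw [hsplit]
  -- first sum: reindex to ∑_{k in range (n+1)} c_k k y^k
  have hA : ∑ i ∈ Finset.range (n + 1),
      ((i : ℝ) + 1) * (stirling2 n (i + 1) : ℝ) * (Nat.factorial (i + 1) : ℝ) * y ^ (i + 1)
      = ∑ k ∈ Finset.range (n + 1),
        (stirling2 n k : ℝ) * (Nat.factorial k : ℝ) * ((k : ℝ) * y ^ k) := by
    have hz : (stirling2 n (n + 1) : ℝ) = 0 := by
      rw [stirling2_eq_zero n (n + 1) (by omega)]; norm_num
    rw [Finset.sum_range_succ, hz]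
    conv_rhs => rw [Finset.sum_range_succ']
    simp only [Nat.cast_zero, zero_mul, mul_zero, add_zero, zero_add]
    apply Finset.sum_congr rfl
    intro i _
    push_cast
    ring
  -- second sum
  have hB : ∑ i ∈ Finset.range (n + 1),
      (stirling2 n i : ℝ) * (Nat.factorial (i + 1) : ℝ) * y ^ (i + 1)
      = y * (∑ k ∈ Finset.range (n + 1),
          (stirling2 n k : ℝ) * (Nat.factorial k : ℝ) * y ^ k)
        + y * (∑ k ∈ Finset.range (n + 1),
          (stirling2 n k : ℝ) * (Nat.factorial k : ℝ) * ((k : ℝ) * y ^ k)) := by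
    rw [Finset.mul_sum, Finset.mul_sum, ← Finset.sum_add_distrib]
    apply Finset.sum_congr rfl
    intro i _
    have : (Nat.factorial (i + 1) : ℝ) = ((i : ℝ) + 1) * (Nat.factorial i : ℝ) := by
      rw [Nat.factorial_succ]; push_cast; ring
    rw [this, pow_succ]
    ring
  rw [hA, hB, ← hT]
  ring

theorem geomPoly_reflection (n : ℕ) (hn : 0 < n) (y : ℝ) :
    (y + 1) * geomPoly n y = (-1) ^ n * y * geomPoly n (-y - 1) := by
  induction n, hn using Nat.le_induction generalizing y with
  | base =>
    simp [geomPoly, Finset.sum_range_succ, stirling2, Nat.factorial]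
    ring
  | succ n hn ih =>
    -- differentiate the induction hypothesis
    have hfun : (fun z : ℝ => (z + 1) * geomPoly n z)
        = (fun z : ℝ => (-1) ^ n * z * geomPoly n (-z - 1)) := by
      funext z; exact ih z
    have hL : HasDerivAt (fun z : ℝ => (z + 1) * geomPoly n z)
        (1 * geomPoly n y + (y + 1) * gd n y) y :=
      ((hasDerivAt_id y).add_const 1).mul (geomPoly_hasDerivAt n y)
    have hcomp : HasDerivAt (fun z : ℝ => geomPoly n (-z - 1))
        (gd n (-y - 1) * (-1)) y :=
      by
        have h1 := geomPoly_hasDerivAt n (-y - 1)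
        have h2 : HasDerivAt (fun z : ℝ => -z - 1) (-1) y := ((hasDerivAt_id y).neg).sub_const 1
        exact h1.comp y h2
    have hR : HasDerivAt (fun z : ℝ => (-1) ^ n * z * geomPoly n (-z - 1))
        ((-1) ^ n * geomPoly n (-y - 1)
          + ((-1) ^ n * y) * (gd n (-y - 1) * (-1))) y := by
      have := ((hasDerivAt_id y).const_mul ((-1 : ℝ) ^ n)).mul hcomp
      exact this.congr_deriv (by simp only [id]; ring)
    have hL' : HasDerivAt (fun z : ℝ => (z + 1) * geomPoly n z)
        ((-1) ^ n * geomPoly n (-y - 1)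
          + ((-1) ^ n * y) * (gd n (-y - 1) * (-1))) y := by
      rw [hfun]; exact hR
    have hd := hL.unique hL'
    have h := ih y
    rw [geomPoly_succ n y, geomPoly_succ n (-y - 1), pow_succ]
    linear_combination (y * (y + 1)) * hd
end

section
/- For all non-negative integers n and p, ∫_{-1}^{0} (1+y)^p · w_n(x; y) dy = B_{n,p}(x)/(p+1), where w_n(x;y) is the two-variable geometric polynomial. -/
/-- The two-variable geometric polynomials `w_n(x;y) = ∑ C(n,k) w_k(y) x^{n-k}`. -/
def geomPoly2 (n : ℕ) (x y : ℝ) : ℝ :=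
  ∑ k ∈ Finset.range (n + 1), (n.choose k : ℝ) * geomPoly k y * x ^ (n - k)

/-- The p-Bernoulli polynomials `B_{n,p}(x) = ∑ C(n,k) x^{n-k} B_{k,p}`. -/
def pBernoulliPoly (n p : ℕ) (x : ℝ) : ℝ :=
  ∑ k ∈ Finset.range (n + 1), (n.choose k : ℝ) * x ^ (n - k) * (pBernoulli k p : ℝ)

open intervalIntegral Finset

noncomputable def JJ (k p : ℕ) : ℝ := ∫ y in (-1:ℝ)..0, (1+y)^p * y^k

lemma intable (k p : ℕ) : IntervalIntegrable (fun y : ℝ => (1+y)^p * y^k) MeasureTheory.volume (-1) 0 :=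
  (by fun_prop : Continuous fun y : ℝ => (1+y)^p * y^k).intervalIntegrable _ _

lemma JJ_split (k p : ℕ) : JJ k (p+1) = JJ k p + JJ (k+1) p := by
  unfold JJ
  rw [← intervalIntegral.integral_add (intable k p) (intable (k+1) p)]
  rw [show (fun y:ℝ => (1+y)^(p+1)*y^k) = fun y:ℝ => (1+y)^p*y^k + (1+y)^p*y^(k+1) from
    funext fun y => by ring]

lemma JJ_rec (k p : ℕ) : ((k:ℝ)+1) * JJ k p + ((p:ℝ)+(k:ℝ)+2) * JJ (k+1) p = 0 := by
  have hder : ∀ y ∈ Set.uIcc (-1:ℝ) 0, HasDerivAt (fun y : ℝ => (1+y)^(p+1)*y^(k+1))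
      (((p:ℝ)+1)*((1+y)^p*y^(k+1)) + ((k:ℝ)+1)*((1+y)^(p+1)*y^k)) y := by
    intro y _
    have h1 : HasDerivAt (fun y : ℝ => (1+y)) 1 y := (hasDerivAt_id y).const_add 1
    have h2 : HasDerivAt (fun y : ℝ => (1+y)^(p+1)) (((p+1 : ℕ) : ℝ) * (1+y)^(p+1-1) * 1) y := h1.pow (p+1)
    have h3 := hasDerivAt_pow (k+1) y
    have h4 : HasDerivAt (fun y : ℝ => (1+y)^(p+1) * y^(k+1)) _ y := h2.mul h3
    convert h4 using 1
    simp only [Nat.add_sub_cancel]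
    push_cast
    ring
  have hint : IntervalIntegrable (fun y : ℝ =>
      ((p:ℝ)+1)*((1+y)^p*y^(k+1)) + ((k:ℝ)+1)*((1+y)^(p+1)*y^k)) MeasureTheory.volume (-1) 0 :=
    (((intable (k+1) p).const_mul _).add ((intable k (p+1)).const_mul _))
  have h0 := intervalIntegral.integral_eq_sub_of_hasDerivAt hder hint
  rw [intervalIntegral.integral_add ((intable (k+1) p).const_mul _) ((intable k (p+1)).const_mul _),
    intervalIntegral.integral_const_mul, intervalIntegral.integral_const_mul] at h0
  have e0 : (∫ y in (-1:ℝ)..0, (1+y)^p*y^(k+1)) = JJ (k+1) p := rfl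
  have e1 : (∫ y in (-1:ℝ)..0, (1+y)^(p+1)*y^k) = JJ k (p+1) := rfl
  rw [e0, e1, JJ_split k p] at h0
  norm_num at h0
  linarith

lemma JJ_zero (p : ℕ) : JJ 0 p = 1 / ((p:ℝ) + 1) := by
  unfold JJ
  simp only [pow_zero, mul_one]
  have h : ∀ y : ℝ, (1+y)^p = (fun t : ℝ => t^p) (y + 1) := fun y => by rw [add_comm]
  simp only [h]
  rw [intervalIntegral.integral_comp_add_right (fun t : ℝ => t^p) 1]
  norm_num [integral_pow]

lemma key_s9 (k p : ℕ) : (p:ℝ) * JJ k p - ((p:ℝ)+1) * JJ k (p+1)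
    = (k:ℝ) * JJ k p + ((k:ℝ)+1) * JJ (k+1) p := by
  have h1 := JJ_split k p
  have h2 := JJ_rec k p
  linear_combination (-((p:ℝ)+1)) * h1 - h2

lemma st_zero : ∀ n k : ℕ, n < k → stirling2 n k = 0 := by
  intro n
  induction n with
  | zero => intro k hk; match k, hk with | k+1, _ => rfl
  | succ n ih =>
    intro k hk
    match k, hk with
    | k+1, hk =>
      have h1 : n < k + 1 := by omega
      have h2 : n < k := by omega
      show (k + 1) * stirling2 n (k + 1) + stirling2 n k = 0
      rw [ih _ h1, ih _ h2]; ring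

lemma pB_eq (n : ℕ) : ∀ p : ℕ, (pBernoulli n p : ℝ)
    = ((p:ℝ)+1) * ∑ k ∈ Finset.range (n+1),
        (stirling2 n k : ℝ) * (Nat.factorial k : ℝ) * JJ k p := by
  induction n with
  | zero =>
    intro p
    have hp : ((p:ℝ)+1) ≠ 0 := by positivity
    simp [pBernoulli, stirling2, JJ_zero, Finset.sum_range_one]
    field_simp
  | succ n ih =>
    intro p
    have hp2 : ((p:ℝ)+2) ≠ 0 := by positivity
    have hrec : (pBernoulli (n+1) p : ℝ)
        = (p:ℝ) * (pBernoulli n p : ℝ) - ((p:ℝ)+1)^2/((p:ℝ)+2) * (pBernoulli n (p+1) : ℝ) := by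
      rw [pBernoulli]; push_cast; ring
    rw [hrec, ih p, ih (p+1)]
    push_cast
    have hsum : (∑ k ∈ Finset.range (n+2), (stirling2 (n+1) k : ℝ) * (Nat.factorial k : ℝ) * JJ k p)
        = (p:ℝ) * (∑ k ∈ Finset.range (n+1), (stirling2 n k : ℝ) * (Nat.factorial k : ℝ) * JJ k p)
          - ((p:ℝ)+1) * (∑ k ∈ Finset.range (n+1), (stirling2 n k : ℝ) * (Nat.factorial k : ℝ) * JJ k (p+1)) := by
      rw [Finset.mul_sum, Finset.mul_sum, ← Finset.sum_sub_distrib]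
      have hterm : ∀ k, (p:ℝ) * ((stirling2 n k : ℝ) * (Nat.factorial k : ℝ) * JJ k p)
          - ((p:ℝ)+1) * ((stirling2 n k : ℝ) * (Nat.factorial k : ℝ) * JJ k (p+1))
          = (k:ℝ) * ((stirling2 n k : ℝ) * (Nat.factorial k : ℝ) * JJ k p)
            + (stirling2 n k : ℝ) * (Nat.factorial (k+1) : ℝ) * JJ (k+1) p := by
        intro k
        have := key_s9 k p
        have hf : (Nat.factorial (k+1) : ℝ) = ((k:ℝ)+1) * (Nat.factorial k : ℝ) := by
          rw [Nat.factorial_succ]; push_cast; ring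
        rw [hf]
        linear_combination ((stirling2 n k : ℝ) * (Nat.factorial k : ℝ)) * this
      rw [Finset.sum_congr rfl (fun k _ => hterm k), Finset.sum_add_distrib]
      have h0 : (stirling2 (n+1) 0 : ℝ) = 0 := by norm_num [stirling2]
      have hgn1 : ((n+1 : ℕ):ℝ) * ((stirling2 n (n+1) : ℝ) * (Nat.factorial (n+1) : ℝ) * JJ (n+1) p) = 0 := by
        rw [st_zero n (n+1) (by omega)]; push_cast; ring
      have hg0 : ((0 : ℕ):ℝ) * ((stirling2 n 0 : ℝ) * (Nat.factorial 0 : ℝ) * JJ 0 p) = 0 := by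
        push_cast; ring
      have hA : (∑ i ∈ Finset.range (n+1),
            ((i:ℕ)+1 : ℝ) * ((stirling2 n (i+1) : ℝ) * (Nat.factorial (i+1) : ℝ) * JJ (i+1) p))
          = ∑ k ∈ Finset.range (n+1),
            (k : ℝ) * ((stirling2 n k : ℝ) * (Nat.factorial k : ℝ) * JJ k p) := by
        have h1 := Finset.sum_range_succ'
          (fun k => (k : ℝ) * ((stirling2 n k : ℝ) * (Nat.factorial k : ℝ) * JJ k p)) (n+1)
        rw [Finset.sum_range_succ
          (fun k => (k : ℝ) * ((stirling2 n k : ℝ) * (Nat.factorial k : ℝ) * JJ k p)) (n+1)] at h1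
        simp only [hgn1, hg0, add_zero] at h1
        push_cast at h1 ⊢
        linarith
      rw [Finset.sum_range_succ']
      simp only [h0, Nat.factorial_zero]
      have hstep : ∀ i, (stirling2 (n+1) (i+1) : ℝ) * (Nat.factorial (i+1) : ℝ) * JJ (i+1) p
          = ((i:ℕ)+1 : ℝ) * ((stirling2 n (i+1) : ℝ) * (Nat.factorial (i+1) : ℝ) * JJ (i+1) p)
            + (stirling2 n i : ℝ) * (Nat.factorial (i+1) : ℝ) * JJ (i+1) p := by
        intro i
        have : stirling2 (n+1) (i+1) = (i+1) * stirling2 n (i+1) + stirling2 n i := rfl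
        rw [this]; push_cast; ring
      rw [Finset.sum_congr rfl (fun i _ => hstep i), Finset.sum_add_distrib, hA]
      ring
    rw [hsum]
    field_simp
    ring

lemma cont_geomPoly (k : ℕ) : Continuous (geomPoly k) := by
  unfold geomPoly
  exact continuous_finset_sum (f := fun j (y : ℝ) => (stirling2 k j : ℝ) * (Nat.factorial j : ℝ) * y ^ j) _ fun j _ => by fun_prop

lemma int_geomPoly (k p : ℕ) :
    ∫ y in (-1:ℝ)..0, (1+y)^p * geomPoly k y = (pBernoulli k p : ℝ) / ((p:ℝ)+1) := by
  have hfun : (fun y : ℝ => (1+y)^p * geomPoly k y)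
      = fun y : ℝ => ∑ j ∈ Finset.range (k+1),
          (stirling2 k j : ℝ) * (Nat.factorial j : ℝ) * ((1+y)^p * y^j) := by
    funext y
    unfold geomPoly
    rw [Finset.mul_sum]
    exact Finset.sum_congr rfl fun j _ => by ring
  rw [hfun, intervalIntegral.integral_finset_sum (fun j _ =>
    ((intable j p).const_mul _))]
  simp only [intervalIntegral.integral_const_mul]
  have hJ : ∀ j, (∫ y in (-1:ℝ)..0, (1+y)^p * y^j) = JJ j p := fun j => rfl
  simp only [hJ]
  have hp : ((p:ℝ)+1) ≠ 0 := by positivity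
  rw [pB_eq k p]
  field_simp

theorem integral_geomPoly2 (n p : ℕ) (x : ℝ) :
    ∫ y in (-1 : ℝ)..0, (1 + y) ^ p * geomPoly2 n x y = pBernoulliPoly n p x / (p + 1) := by
  have hfun : (fun y : ℝ => (1+y)^p * geomPoly2 n x y)
      = fun y : ℝ => ∑ k ∈ Finset.range (n+1),
          ((n.choose k : ℝ) * x ^ (n-k)) * ((1+y)^p * geomPoly k y) := by
    funext y
    unfold geomPoly2
    rw [Finset.mul_sum]
    exact Finset.sum_congr rfl fun k _ => by ring
  rw [hfun, intervalIntegral.integral_finset_sum (fun k _ => by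
    exact (((by fun_prop : Continuous fun y : ℝ => (1+y)^p).mul (cont_geomPoly k)).intervalIntegrable _ _).const_mul _)]
  simp only [intervalIntegral.integral_const_mul, int_geomPoly]
  unfold pBernoulliPoly
  rw [Finset.sum_div]
  exact Finset.sum_congr rfl fun k _ => by ring
end

section
/- For non-negative integers n, m, p: ∑_{k=0}^{m} B_{n,p}(k+1) = (B_{n+1}(m+1) - B_{n+1})/(n+1) + ((p+1)/(p+2)) · (B_{n,p+1}(m+1) - B_{n,p+1}). -/
/-- Evaluation of the `n`-th Bernoulli polynomial at a real number. -/
noncomputable def bernoulliPolyR (n : ℕ) (x : ℝ) : ℝ :=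
  Polynomial.eval x ((Polynomial.bernoulli n).map (algebraMap ℚ ℝ))

open Finset

lemma pBernoulli_succ_real (n p : ℕ) :
    (pBernoulli (n+1) p : ℝ)
      = p * pBernoulli n p - ((p+1:ℝ)^2/(p+2)) * pBernoulli n (p+1) := by
  rw [pBernoulli]; push_cast; ring

lemma pBernoulliPoly_zero_eval (n q : ℕ) : pBernoulliPoly n q 0 = (pBernoulli n q : ℝ) := by
  rw [pBernoulliPoly, Finset.sum_range_succ]
  rw [Finset.sum_eq_zero, zero_add]
  · simp
  · intro k hk
    rw [zero_pow (Nat.sub_ne_zero_of_lt (mem_range.mp hk))]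
    ring

lemma pBernoulliPoly_succ_eq (n p : ℕ) (x : ℝ) :
    pBernoulliPoly (n+1) p x
      = (x + p) * pBernoulliPoly n p x - ((p+1:ℝ)^2/(p+2)) * pBernoulliPoly n (p+1) x := by
  have h1 : pBernoulliPoly (n+1) p x
      = ∑ k ∈ range (n+1), ((n+1).choose (k+1) : ℝ) * x ^ (n - k) * pBernoulli (k+1) p
        + x ^ (n+1) := by
    rw [pBernoulliPoly, Finset.sum_range_succ']
    simp [pBernoulli]
  have h2 : ∀ k ∈ range (n+1), ((n+1).choose (k+1) : ℝ) * x ^ (n - k) * pBernoulli (k+1) p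
      = (n.choose k : ℝ) * x ^ (n - k) * pBernoulli (k+1) p
        + (n.choose (k+1) : ℝ) * x ^ (n - k) * pBernoulli (k+1) p := by
    intro k _
    rw [Nat.choose_succ_succ]
    push_cast
    ring
  rw [h1, Finset.sum_congr rfl h2, Finset.sum_add_distrib]
  have h3 : ∑ k ∈ range (n+1), (n.choose k : ℝ) * x ^ (n - k) * pBernoulli (k+1) p
      = p * pBernoulliPoly n p x - ((p+1:ℝ)^2/(p+2)) * pBernoulliPoly n (p+1) x := by
    rw [pBernoulliPoly, pBernoulliPoly, Finset.mul_sum, Finset.mul_sum, ← Finset.sum_sub_distrib]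
    refine Finset.sum_congr rfl fun k _ => ?_
    rw [pBernoulli_succ_real]
    ring
  have h4 : ∑ k ∈ range (n+1), (n.choose (k+1) : ℝ) * x ^ (n - k) * pBernoulli (k+1) p
      + x ^ (n+1) = x * pBernoulliPoly n p x := by
    rw [pBernoulliPoly, Finset.mul_sum]
    rw [Finset.sum_range_succ]  -- drop top term of LHS sum? top term k = n : choose n (n+1) = 0
    rw [Nat.choose_succ_self]
    push_cast
    rw [Finset.sum_range_succ']
    have h5 : ∀ k ∈ range n, x * ((n.choose (k+1) : ℝ) * x ^ (n-(k+1)) * pBernoulli (k+1) p)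
        = (n.choose (k+1) : ℝ) * x ^ (n - k) * pBernoulli (k+1) p := by
      intro k hk
      have hk' := Finset.mem_range.mp hk
      have hnk : n - k = (n - (k+1)) + 1 := by omega
      rw [hnk, pow_succ]; ring
    rw [Finset.sum_congr rfl h5]
    simp [pBernoulli, pow_succ]
    ring
  rw [h3]
  linear_combination h4

lemma pBernoulliPoly_key (n : ℕ) : ∀ (p : ℕ) (x : ℝ),
    pBernoulliPoly n p (x+1)
      = x^n + ((p+1:ℝ)/(p+2))
          * (pBernoulliPoly n (p+1) (x+1) - pBernoulliPoly n (p+1) x) := by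
  induction n with
  | zero => intro p x; simp [pBernoulliPoly, pBernoulli]
  | succ n ih =>
    intro p x
    rw [pBernoulliPoly_succ_eq, pBernoulliPoly_succ_eq n (p+1) (x+1),
      pBernoulliPoly_succ_eq n (p+1) x, ih p x, ih (p+1) x]
    have hp2 : (p:ℝ) + 2 ≠ 0 := by positivity
    have hp3 : (p:ℝ) + 3 ≠ 0 := by positivity
    push_cast
    field_simp
    ring

theorem sum_pBernoulliPoly (n m p : ℕ) :
    ∑ k ∈ Finset.range (m + 1), pBernoulliPoly n p (k + 1)
      = (bernoulliPolyR (n + 1) (m + 1) - (bernoulli (n + 1) : ℝ)) / (n + 1)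
        + ((p + 1 : ℝ) / (p + 2))
          * (pBernoulliPoly n (p + 1) (m + 1) - (pBernoulli n (p + 1) : ℝ)) := by
  have hn1 : ((n:ℝ) + 1) ≠ 0 := by positivity
  have hber : bernoulliPolyR (n + 1) ((m:ℝ) + 1)
      = (bernoulli (n+1) : ℝ) + ((n:ℝ)+1) * ∑ k ∈ Finset.range (m+1), (k:ℝ)^n := by
    rw [bernoulliPolyR, Polynomial.eval_map]
    have hx : ((m:ℝ) + 1) = algebraMap ℚ ℝ (((m+1 : ℕ) : ℚ)) := by
      push_cast
      simp
    rw [hx, Polynomial.eval₂_at_apply, eq_ratCast (algebraMap ℚ ℝ),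
      Polynomial.bernoulli_succ_eval]
    push_cast [Nat.succ_eq_add_one]
    ring
  have hkey : ∀ k ∈ Finset.range (m+1), pBernoulliPoly n p ((k:ℝ) + 1)
      = (k:ℝ)^n + ((p+1:ℝ)/(p+2))
          * (pBernoulliPoly n (p+1) ((k:ℝ)+1) - pBernoulliPoly n (p+1) (k:ℝ)) :=
    fun k _ => pBernoulliPoly_key n p k
  rw [Finset.sum_congr rfl hkey, Finset.sum_add_distrib, ← Finset.mul_sum]
  have htel : ∑ k ∈ Finset.range (m+1),
      (pBernoulliPoly n (p+1) ((k:ℝ)+1) - pBernoulliPoly n (p+1) (k:ℝ))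
      = pBernoulliPoly n (p+1) ((m:ℝ)+1) - (pBernoulli n (p+1) : ℝ) := by
    have h := Finset.sum_range_sub (fun k : ℕ => pBernoulliPoly n (p+1) (k:ℝ)) (m+1)
    push_cast at h
    rw [h, pBernoulliPoly_zero_eval]
  rw [htel, hber]
  field_simp
  ring
end

section
/- For m ≥ 1 and n, p ≥ 0: m^{n-1} · ∑_{k=0}^{m-1} B_{n,p}(x + k/m) = (p+1)·B_n(mx) - p · ∑_{k=0}^{n} C(n,k) · m^k · B_{n-k}(mx) · B_{k,p} / (k+1), as an identity of polynomials (or functions) in x. -/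
open Finset

/-! ### Auxiliary sum-rearrangement lemmas -/

lemma aux_tri_swap {M : Type*} [AddCommMonoid M] (n : ℕ) (F : ℕ → ℕ → M) :
    ∑ l ∈ range (n+1), ∑ a ∈ range (n-l+1), F l a
      = ∑ a ∈ range (n+1), ∑ l ∈ range (n-a+1), F l a := by
  rw [Finset.sum_sigma', Finset.sum_sigma']
  refine Finset.sum_nbij' (fun x : (_ : ℕ) × ℕ => ((⟨x.2, x.1⟩ : (_ : ℕ) × ℕ)))
    (fun x : (_ : ℕ) × ℕ => ((⟨x.2, x.1⟩ : (_ : ℕ) × ℕ))) ?_ ?_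
    (fun _ _ => rfl) (fun _ _ => rfl) (fun _ _ => rfl) <;>
  · simp only [Finset.mem_sigma, Finset.mem_range, Sigma.forall]
    intro a b; omega

lemma aux_tri2 {M : Type*} [AddCommMonoid M] (n : ℕ) (f : ℕ → ℕ → M) :
    ∑ i ∈ range (n+1), ∑ t ∈ range (n-i+1), f i (i+t)
      = ∑ j ∈ range (n+1), ∑ i ∈ range (j+1), f i j := by
  rw [Finset.sum_sigma', Finset.sum_sigma']
  refine Finset.sum_nbij' (fun x : (_ : ℕ) × ℕ => ((⟨x.1 + x.2, x.1⟩ : (_ : ℕ) × ℕ)))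
    (fun x : (_ : ℕ) × ℕ => ((⟨x.2, x.1 - x.2⟩ : (_ : ℕ) × ℕ))) ?_ ?_
    ?_ ?_ (fun _ _ => rfl)
  · simp only [Finset.mem_sigma, Finset.mem_range, Sigma.forall]; intro a b; omega
  · simp only [Finset.mem_sigma, Finset.mem_range, Sigma.forall]; intro a b; omega
  · simp only [Finset.mem_sigma, Finset.mem_range, Sigma.forall]
    intro a b h
    simp only [Nat.add_sub_cancel_left]
  · simp only [Finset.mem_sigma, Finset.mem_range, Sigma.forall]
    intro a b h
    have : b + (a - b) = a := by omega
    simp only [this]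

/-! ### Basic facts about Bernoulli polynomials over ℝ -/

lemma bpr_def (n : ℕ) (x : ℝ) :
    bernoulliPolyR n x
      = ∑ i ∈ range (n+1), (bernoulli i : ℝ) * (n.choose i : ℝ) * x ^ (n - i) := by
  unfold bernoulliPolyR
  rw [Polynomial.bernoulli, Polynomial.map_sum, Polynomial.eval_finset_sum]
  refine Finset.sum_congr rfl fun i _ => ?_
  simp [Polynomial.eval_monomial]

/-- `(r+1) y^r = ∑ C(r+1,j) B_j(y)` -/
lemma inv_bern (r : ℕ) (y : ℝ) :
    ((r:ℝ)+1) * y ^ r = ∑ j ∈ range (r+1), ((r+1).choose j : ℝ) * bernoulliPolyR j y := by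
  have h := Polynomial.sum_bernoulli r
  have h2 := congrArg (fun P : Polynomial ℚ => Polynomial.eval y (P.map (algebraMap ℚ ℝ))) h
  simp only [Polynomial.map_sum, Polynomial.eval_finset_sum, Polynomial.map_smul,
    Polynomial.eval_smul, Polynomial.map_monomial, Polynomial.eval_monomial] at h2
  rw [show ((r:ℝ)+1) * y ^ r = (algebraMap ℚ ℝ) ((r:ℚ) + 1) * y ^ r by push_cast; ring, ← h2]
  refine Finset.sum_congr rfl fun j _ => ?_
  rw [bernoulliPolyR]
  simp [Rat.smul_def, smul_eq_mul]

/-- Faulhaber over ℝ -/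
lemma aux_faul (m r : ℕ) :
    (∑ k ∈ range m, (k:ℝ)^r)
      = ∑ a ∈ range (r+1), (bernoulli a : ℝ) * ((r+1).choose a : ℝ) * (m:ℝ)^(r+1-a) / ((r:ℝ)+1) := by
  have h := sum_range_pow m r
  have h2 := congrArg (fun q : ℚ => (q : ℝ)) h
  push_cast at h2
  rw [h2]

/-- sum_bernoulli over ℝ -/
lemma aux_sum_bern (n : ℕ) :
    (∑ k ∈ range n, (n.choose k : ℝ) * (bernoulli k : ℝ)) = if n = 1 then 1 else 0 := by
  have h := sum_bernoulli n
  have h2 := congrArg (fun q : ℚ => (q : ℝ)) h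
  push_cast at h2
  rw [h2]
  split <;> norm_num

/-- Addition formula for Bernoulli polynomials. -/
lemma bpr_add (n : ℕ) (x y : ℝ) :
    bernoulliPolyR n (x + y)
      = ∑ j ∈ range (n+1), (n.choose j : ℝ) * bernoulliPolyR j y * x ^ (n - j) := by
  rw [bpr_def]
  calc
    ∑ i ∈ range (n+1), (bernoulli i : ℝ) * (n.choose i : ℝ) * (x+y) ^ (n-i)
        = ∑ i ∈ range (n+1), ∑ t ∈ range (n-i+1),
            (bernoulli i : ℝ) * (n.choose i : ℝ) * (y^t * x^(n-i-t) * ((n-i).choose t : ℝ)) := by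
          refine Finset.sum_congr rfl fun i _ => ?_
          rw [add_comm x y, add_pow, mul_sum]
    _ = ∑ i ∈ range (n+1), ∑ t ∈ range (n-i+1),
          (fun i j => (bernoulli i : ℝ) * (n.choose j : ℝ) * (j.choose i : ℝ)
            * y^(j-i) * x^(n-j)) i (i+t) := by
          refine Finset.sum_congr rfl fun i hi => Finset.sum_congr rfl fun t ht => ?_
          simp only [mem_range] at hi ht
          have hin : i + t ≤ n := by omega
          have hc : (n.choose (i+t)) * ((i+t).choose i) = (n.choose i) * ((n-i).choose t) := by
            have := Nat.choose_mul (n := n) (Nat.le_add_right i t)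
            simpa using this
          have hc' : ((n.choose (i+t)) : ℝ) * (((i+t).choose i) : ℝ)
              = ((n.choose i) : ℝ) * (((n-i).choose t) : ℝ) := by exact_mod_cast hc
          simp only [Nat.add_sub_cancel_left, Nat.sub_sub]
          linear_combination -(bernoulli i : ℝ) * y^t * x^(n-(i+t)) * hc'
    _ = ∑ j ∈ range (n+1), ∑ i ∈ range (j+1),
          (bernoulli i : ℝ) * (n.choose j : ℝ) * (j.choose i : ℝ) * y^(j-i) * x^(n-j) := by
          exact aux_tri2 n (fun i j => (bernoulli i : ℝ) * (n.choose j : ℝ) * (j.choose i : ℝ)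
            * y^(j-i) * x^(n-j))
    _ = ∑ j ∈ range (n+1), (n.choose j : ℝ) * bernoulliPolyR j y * x ^ (n - j) := by
          refine Finset.sum_congr rfl fun j _ => ?_
          rw [bpr_def, mul_sum, sum_mul]
          refine Finset.sum_congr rfl fun i _ => ?_
          ring

/-! ### Binomial coefficient identities -/

lemma aux_trinom {N l a : ℕ} (h : l + a ≤ N) :
    N.choose l * (N-l).choose a = N.choose a * (N-a).choose l := by
  have h1 := Nat.choose_mul (n := N) (Nat.le_add_right l a)
  have h2 := Nat.choose_mul (n := N) (Nat.le_add_left a l)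
  rw [Nat.choose_symm_add] at h1
  simp only [Nat.add_sub_cancel_left, Nat.add_sub_cancel] at h1 h2
  rw [← h1, h2]

lemma coef1 {j l a : ℕ} (hl : l ≤ j) (ha : a ≤ j - l) :
    (j.choose l : ℝ) * ((j-l+1).choose a : ℝ) / (((j-l : ℕ):ℝ)+1)
      = ((j+1).choose a : ℝ) * ((j+1-a).choose l : ℝ) / ((j:ℝ)+1) := by
  have key : j.choose l * ((j-l+1).choose a) * (j+1)
      = (j+1).choose a * ((j+1-a).choose l) * (j-l+1) := by
    have e1 : j.choose l * (j+1) = (j+1).choose l * (j-l+1) := by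
      have := Nat.choose_mul_succ_eq j l
      rw [this]; congr 1; omega
    have e2 : (j+1).choose l * ((j+1-l).choose a) = (j+1).choose a * ((j+1-a).choose l) :=
      aux_trinom (by omega)
    have e3 : (j-l+1) = (j+1-l) := by omega
    calc j.choose l * ((j-l+1).choose a) * (j+1)
        = (j.choose l * (j+1)) * ((j-l+1).choose a) := by ring
      _ = ((j+1).choose l * (j-l+1)) * ((j+1-l).choose a) := by rw [e1, e3]
      _ = ((j+1).choose l * ((j+1-l).choose a)) * (j-l+1) := by ring
      _ = (j+1).choose a * ((j+1-a).choose l) * (j-l+1) := by rw [e2]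
  have keyR : (j.choose l : ℝ) * ((j-l+1).choose a : ℝ) * ((j:ℝ)+1)
      = ((j+1).choose a : ℝ) * ((j+1-a).choose l : ℝ) * (((j-l:ℕ):ℝ)+1) := by
    have := congrArg (Nat.cast (R := ℝ)) key
    push_cast at this
    linarith [this]
  rw [div_eq_div_iff (by positivity) (by positivity)]
  linarith [keyR]

lemma coef2 {n j k : ℕ} (hj : j ≤ n) (hk : k ≤ n - j) :
    (n.choose k : ℝ) * ((n-k+1).choose j : ℝ) / (((n-k : ℕ):ℝ)+1)
      = (n.choose (n-j) : ℝ) * (((n-j)+1).choose k : ℝ) / (((n-j : ℕ):ℝ)+1) := by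
  set l := n - j with hldef
  have hkl : k ≤ l := hk
  have hln : l ≤ n := by omega
  have key : n.choose k * ((n-k+1).choose j) * (l+1)
      = n.choose l * ((l+1).choose k) * (n-k+1) := by
    have e1 : (n-k+1).choose j = (n-k+1).choose (l-k+1) := by
      have h1 : j ≤ n-k+1 := by omega
      have := Nat.choose_symm h1
      rw [← this]; congr 1; omega
    have e2 : (n-k+1) * ((n-k).choose (l-k)) = (n-k+1).choose (l-k+1) * (l-k+1) := by
      have := Nat.add_one_mul_choose_eq (n-k) (l-k)
      simpa [Nat.succ_eq_add_one] using this
    have e3 : n.choose l * (l.choose k) = n.choose k * ((n-k).choose (l-k)) :=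
      Nat.choose_mul hkl
    have e4 : l.choose k * (l+1) = (l+1).choose k * (l+1-k) := Nat.choose_mul_succ_eq l k
    have hcancel : (l-k+1) > 0 := by omega
    apply Nat.eq_of_mul_eq_mul_right hcancel
    calc n.choose k * ((n-k+1).choose j) * (l+1) * (l-k+1)
        = n.choose k * (l+1) * ((n-k+1).choose (l-k+1) * (l-k+1)) := by rw [e1]; ring
      _ = n.choose k * (l+1) * ((n-k+1) * ((n-k).choose (l-k))) := by rw [e2]
      _ = (n.choose k * ((n-k).choose (l-k))) * (l+1) * (n-k+1) := by ring
      _ = (n.choose l * (l.choose k)) * (l+1) * (n-k+1) := by rw [e3]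
      _ = (l.choose k * (l+1)) * (n.choose l) * (n-k+1) := by ring
      _ = ((l+1).choose k * (l+1-k)) * (n.choose l) * (n-k+1) := by rw [e4]
      _ = n.choose l * ((l+1).choose k) * (n-k+1) * (l-k+1) := by
          have : l+1-k = l-k+1 := by omega
          rw [this]; ring
  have keyR : (n.choose k : ℝ) * ((n-k+1).choose j : ℝ) * (((l:ℕ):ℝ)+1)
      = (n.choose l : ℝ) * (((l+1)).choose k : ℝ) * (((n-k:ℕ):ℝ)+1) := by
    have := congrArg (Nat.cast (R := ℝ)) key
    push_cast at this
    linarith [this]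
  rw [div_eq_div_iff (by positivity) (by positivity)]
  linarith [keyR]

/-! ### Raabe's multiplication formula -/

lemma key_num (j m : ℕ) (hm : 1 ≤ m) :
    (m:ℝ)^j * ∑ k ∈ range m, bernoulliPolyR j ((k:ℝ)/(m:ℝ))
      = (m:ℝ) * (bernoulli j : ℝ) := by
  have hm0 : (m:ℝ) ≠ 0 := by positivity
  have step1 : (m:ℝ)^j * ∑ k ∈ range m, bernoulliPolyR j ((k:ℝ)/(m:ℝ))
      = ∑ l ∈ range (j+1), ∑ a ∈ range (j-l+1),
          (bernoulli l : ℝ) * (bernoulli a : ℝ) * ((j+1).choose a : ℝ)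
            * ((j+1-a).choose l : ℝ) * (m:ℝ)^(j+1-a) / ((j:ℝ)+1) := by
    rw [mul_sum]
    have e : ∀ k : ℕ, (m:ℝ)^j * bernoulliPolyR j ((k:ℝ)/(m:ℝ))
        = ∑ l ∈ range (j+1), (m:ℝ)^j * ((bernoulli l : ℝ) * (j.choose l : ℝ) * ((k:ℝ)/(m:ℝ))^(j-l)) :=
      fun k => by rw [bpr_def j, mul_sum]
    rw [Finset.sum_congr rfl (fun k _ => e k), Finset.sum_comm]
    refine Finset.sum_congr rfl fun l hl => ?_
    simp only [mem_range] at hl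
    have hlj : l ≤ j := by omega
    have hmp : (m:ℝ)^j * ((m:ℝ)^(j-l))⁻¹ = (m:ℝ)^l := by
      rw [mul_inv_eq_iff_eq_mul₀ (by positivity), ← pow_add]
      congr 1; omega
    calc ∑ k ∈ range m, (m:ℝ)^j * ((bernoulli l : ℝ) * (j.choose l : ℝ) * ((k:ℝ)/(m:ℝ))^(j-l))
        = (bernoulli l : ℝ) * (j.choose l : ℝ) * (m:ℝ)^l * ∑ k ∈ range m, (k:ℝ)^(j-l) := by
          rw [mul_sum]
          refine Finset.sum_congr rfl fun k _ => ?_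
          rw [div_pow, div_eq_mul_inv]
          rw [← hmp]; ring
      _ = ∑ a ∈ range (j-l+1),
            (bernoulli l : ℝ) * (bernoulli a : ℝ) * ((j+1).choose a : ℝ)
              * ((j+1-a).choose l : ℝ) * (m:ℝ)^(j+1-a) / ((j:ℝ)+1) := by
          rw [aux_faul m (j-l), mul_sum]
          refine Finset.sum_congr rfl fun a ha => ?_
          simp only [mem_range] at ha
          have haj : a ≤ j - l := by omega
          have c1 := coef1 hlj haj
          have hmp2 : (m:ℝ)^l * (m:ℝ)^(j-l+1-a) = (m:ℝ)^(j+1-a) := by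
            rw [← pow_add]; congr 1; omega
          calc (bernoulli l : ℝ) * (j.choose l : ℝ) * (m:ℝ)^l
                * ((bernoulli a : ℝ) * ((j-l+1).choose a : ℝ) * (m:ℝ)^(j-l+1-a) / (((j-l:ℕ):ℝ) + 1))
              = ((bernoulli l : ℝ) * (bernoulli a : ℝ) * ((m:ℝ)^l * (m:ℝ)^(j-l+1-a)))
                  * ((j.choose l : ℝ) * ((j-l+1).choose a : ℝ) / (((j-l:ℕ):ℝ)+1)) := by ring
            _ = ((bernoulli l : ℝ) * (bernoulli a : ℝ) * (m:ℝ)^(j+1-a))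
                  * (((j+1).choose a : ℝ) * ((j+1-a).choose l : ℝ) / ((j:ℝ)+1)) := by rw [hmp2, c1]
            _ = (bernoulli l : ℝ) * (bernoulli a : ℝ) * ((j+1).choose a : ℝ)
                  * ((j+1-a).choose l : ℝ) * (m:ℝ)^(j+1-a) / ((j:ℝ)+1) := by ring
  rw [step1, aux_tri_swap j]
  have inner : ∀ a ∈ range (j+1), ∑ l ∈ range (j-a+1),
      (bernoulli l : ℝ) * (bernoulli a : ℝ) * ((j+1).choose a : ℝ)
        * ((j+1-a).choose l : ℝ) * (m:ℝ)^(j+1-a) / ((j:ℝ)+1)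
      = (if a = j then (bernoulli a : ℝ) * ((j+1).choose a : ℝ) * (m:ℝ)^(j+1-a) / ((j:ℝ)+1) else 0) := by
    intro a ha
    simp only [mem_range] at ha
    have haj : a ≤ j := by omega
    have e : ∑ l ∈ range (j-a+1),
        (bernoulli l : ℝ) * (bernoulli a : ℝ) * ((j+1).choose a : ℝ)
          * ((j+1-a).choose l : ℝ) * (m:ℝ)^(j+1-a) / ((j:ℝ)+1)
        = ((bernoulli a : ℝ) * ((j+1).choose a : ℝ) * (m:ℝ)^(j+1-a) / ((j:ℝ)+1))
            * ∑ l ∈ range (j-a+1), ((j-a+1).choose l : ℝ) * (bernoulli l : ℝ) := by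
      rw [mul_sum]
      refine Finset.sum_congr rfl fun l _ => ?_
      have e2 : (j+1-a) = (j-a+1) := by omega
      rw [e2]; ring
    rw [e, aux_sum_bern (j-a+1)]
    by_cases h : a = j
    · subst h; simp
    · have h2 : ¬ (j - a + 1 = 1) := by omega
      simp [h, h2]
      exact fun h3 => absurd h3 (by omega)
  rw [Finset.sum_congr rfl inner, Finset.sum_ite_eq' (range (j+1)) j]
  simp only [mem_range, lt_add_iff_pos_right, zero_lt_one, if_true]
  have e3 : (j+1).choose j = j+1 := Nat.choose_succ_self_right j
  rw [e3]
  have e4 : j + 1 - j = 1 := by omega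
  rw [e4]
  field_simp
  push_cast
  ring

/-- Raabe's multiplication theorem. -/
lemma raabe (n m : ℕ) (hm : 1 ≤ m) (x : ℝ) :
    (m : ℝ) ^ ((n : ℤ) - 1) * ∑ k ∈ range m, bernoulliPolyR n (x + k / m)
      = bernoulliPolyR n (m * x) := by
  have hm0 : (m:ℝ) ≠ 0 := by positivity
  have e1 : ∀ k : ℕ, bernoulliPolyR n (x + (k:ℝ)/(m:ℝ))
      = ∑ j ∈ range (n+1), (n.choose j : ℝ) * bernoulliPolyR j ((k:ℝ)/(m:ℝ)) * x^(n-j) :=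
    fun k => bpr_add n x ((k:ℝ)/(m:ℝ))
  have step1 : ∑ k ∈ range m, bernoulliPolyR n (x + (k:ℝ) / m)
      = ∑ j ∈ range (n+1), (n.choose j : ℝ) * (∑ k ∈ range m, bernoulliPolyR j ((k:ℝ)/m)) * x^(n-j) := by
    rw [Finset.sum_congr rfl (fun k _ => e1 k), Finset.sum_comm]
    refine Finset.sum_congr rfl fun j _ => ?_
    rw [mul_sum, sum_mul]
  rw [step1, mul_sum, bpr_def]
  refine Finset.sum_congr rfl fun j hj => ?_
  simp only [mem_range] at hj
  have hjn : j ≤ n := by omega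
  have hkey := key_num j m hm
  have hS : (∑ k ∈ range m, bernoulliPolyR j ((k:ℝ)/m)) = (m:ℝ) * (bernoulli j : ℝ) / (m:ℝ)^j := by
    rw [eq_div_iff (by positivity)]
    linear_combination hkey
  rw [hS]
  have hzp : (m:ℝ) ^ ((n:ℤ)-1) = (m:ℝ)^n / (m:ℝ) := by
    rw [zpow_sub₀ hm0, zpow_natCast, zpow_one]
  rw [hzp, mul_pow]
  have hpow : (m:ℝ)^n = (m:ℝ)^(n-j) * (m:ℝ)^j := by
    rw [← pow_add]; congr 1; omega
  field_simp
  rw [hpow]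
  ring

/-! ### The p-Bernoulli number recurrence -/

lemma pB_sum (l p : ℕ) (hl : 1 ≤ l) :
    ∑ k ∈ range (l+1), ((l+1).choose k : ℚ) * pBernoulli k p
      = -(p:ℚ) * pBernoulli l p := by
  induction l, hl using Nat.le_induction generalizing p with
  | base =>
    have hp : (p:ℚ) + 2 ≠ 0 := by positivity
    show ∑ k ∈ range 2, ((2).choose k : ℚ) * pBernoulli k p = _
    rw [Finset.sum_range_succ, Finset.sum_range_one]
    show (1:ℚ) * pBernoulli 0 p + 2 * pBernoulli 1 p = _
    show (1:ℚ) * 1 + 2 * ((p:ℚ) * 1 - ((p+1:ℚ)^2/(p+2)) * 1)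
        = -(p:ℚ) * ((p:ℚ) * 1 - ((p+1:ℚ)^2/(p+2)) * 1)
    field_simp
    try ring
  | succ l hl ih =>
    have hrec : ∀ (k q : ℕ), pBernoulli (k+1) q
        = (q:ℚ) * pBernoulli k q - ((q+1:ℚ)^2/(q+2)) * pBernoulli k (q+1) := fun k q => rfl
    rw [Finset.sum_range_succ']
    have split : ∀ k ∈ range (l+1), ((l+1+1).choose (k+1) : ℚ) * pBernoulli (k+1) p
        = ((p:ℚ) * (((l+1).choose k : ℚ) * pBernoulli k p)
            - ((p+1:ℚ)^2/(p+2)) * (((l+1).choose k : ℚ) * pBernoulli k (p+1)))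
          + ((l+1).choose (k+1) : ℚ) * pBernoulli (k+1) p := by
      intro k _
      rw [Nat.choose_succ_succ (l+1) k, hrec k p]
      push_cast
      ring
    rw [Finset.sum_congr rfl split, Finset.sum_add_distrib, Finset.sum_sub_distrib,
      ← Finset.mul_sum, ← Finset.mul_sum]
    have hD : ∑ k ∈ range (l+1), ((l+1).choose (k+1) : ℚ) * pBernoulli (k+1) p
        = (∑ k ∈ range (l+1), ((l+1).choose k : ℚ) * pBernoulli k p)
          + pBernoulli (l+1) p - 1 := by
      have := Finset.sum_range_succ' (fun k => ((l+1).choose k : ℚ) * pBernoulli k p) (l+1)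
      rw [Finset.sum_range_succ] at this
      have h0 : ((l+1).choose 0 : ℚ) * pBernoulli 0 p = 1 := by
        show ((l+1).choose 0 : ℚ) * 1 = 1
        simp
      have hl1 : ((l+1).choose (l+1) : ℚ) * pBernoulli (l+1) p = pBernoulli (l+1) p := by
        simp
      rw [h0, hl1] at this
      linarith [this]
    rw [hD, ih p, ih (p+1)]
    rw [hrec l p]
    have hchoose0 : ((l+1+1).choose 0 : ℚ) * pBernoulli 0 p = 1 := by
      show ((l+1+1).choose 0 : ℚ) * 1 = 1
      simp
    rw [hchoose0]
    show (p:ℚ) * (-(p:ℚ) * pBernoulli l p)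
        - ((p+1:ℚ)^2/(p+2)) * (-((p+1:ℕ):ℚ) * pBernoulli l (p+1))
        + (-(p:ℚ) * pBernoulli l p
            + ((p:ℚ) * pBernoulli l p - ((p+1:ℚ)^2/(p+2)) * pBernoulli l (p+1)) - 1) + 1
      = -(p:ℚ) * ((p:ℚ) * pBernoulli l p - ((p+1:ℚ)^2/(p+2)) * pBernoulli l (p+1))
    push_cast
    ring

/-! ### The structural identity for p-Bernoulli polynomials -/

lemma pB_struct (n p : ℕ) (y : ℝ) :
    pBernoulliPoly n p y
      = ((p:ℝ) + 1) * bernoulliPolyR n y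
        - (p : ℝ) * ∑ k ∈ range (n + 1),
            (n.choose k : ℝ) * bernoulliPolyR (n - k) y * (pBernoulli k p : ℝ) / (k + 1) := by
  have step1 : pBernoulliPoly n p y
      = ∑ k ∈ range (n+1), ∑ j ∈ range (n-k+1),
          (n.choose k : ℝ) * ((n-k+1).choose j : ℝ) / (((n-k:ℕ):ℝ)+1)
            * (pBernoulli k p : ℝ) * bernoulliPolyR j y := by
    unfold pBernoulliPoly
    refine Finset.sum_congr rfl fun k hk => ?_
    simp only [mem_range] at hk
    have hy := inv_bern (n-k) y
    have hy' : y ^ (n-k) = (∑ j ∈ range (n-k+1), ((n-k+1).choose j : ℝ) * bernoulliPolyR j y)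
        / (((n-k:ℕ):ℝ)+1) := by
      rw [eq_div_iff (by positivity), mul_comm, ← hy]
    rw [hy', Finset.sum_div, mul_sum, sum_mul]
    refine Finset.sum_congr rfl fun j _ => ?_
    ring
  rw [step1, aux_tri_swap n]
  have step2 : ∀ j ∈ range (n+1), ∑ k ∈ range (n-j+1),
      (n.choose k : ℝ) * ((n-k+1).choose j : ℝ) / (((n-k:ℕ):ℝ)+1)
        * (pBernoulli k p : ℝ) * bernoulliPolyR j y
      = (n.choose (n-j) : ℝ) / (((n-j:ℕ):ℝ)+1)
          * (∑ k ∈ range (n-j+1), (((n-j)+1).choose k : ℝ) * (pBernoulli k p : ℝ))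
          * bernoulliPolyR j y := by
    intro j hj
    simp only [mem_range] at hj
    have hjn : j ≤ n := by omega
    rw [mul_sum, sum_mul]
    refine Finset.sum_congr rfl fun k hk => ?_
    simp only [mem_range] at hk
    have hkn : k ≤ n - j := by omega
    rw [show (n.choose k : ℝ) * ((n-k+1).choose j : ℝ) / (((n-k:ℕ):ℝ)+1)
        = (n.choose (n-j) : ℝ) * (((n-j)+1).choose k : ℝ) / (((n-j:ℕ):ℝ)+1) from coef2 hjn hkn]
    ring
  rw [Finset.sum_congr rfl step2]
  -- reflect the sum
  have hrefl : ∑ j ∈ range (n+1),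
      (n.choose (n-j) : ℝ) / (((n-j:ℕ):ℝ)+1)
        * (∑ k ∈ range (n-j+1), (((n-j)+1).choose k : ℝ) * (pBernoulli k p : ℝ))
        * bernoulliPolyR j y
      = ∑ l ∈ range (n+1),
          (n.choose l : ℝ) / (((l:ℕ):ℝ)+1)
            * (∑ k ∈ range (l+1), ((l+1).choose k : ℝ) * (pBernoulli k p : ℝ))
            * bernoulliPolyR (n-l) y := by
    rw [← Finset.sum_range_reflect]
    refine Finset.sum_congr rfl fun l hl => ?_
    simp only [mem_range] at hl
    have h1 : n + 1 - 1 - l = n - l := by omega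
    have h2 : n - (n - l) = l := by omega
    rw [h1, h2]
  rw [hrefl]
  -- now split off l = 0 and use pB_sum
  have hq : ∀ l : ℕ, (∑ k ∈ range (l+1), ((l+1).choose k : ℝ) * (pBernoulli k p : ℝ))
      = (((∑ k ∈ range (l+1), ((l+1).choose k : ℚ) * pBernoulli k p) : ℚ) : ℝ) := by
    intro l; push_cast; ring_nf
  have main : ∀ l ∈ range (n+1),
      (n.choose l : ℝ) / (((l:ℕ):ℝ)+1)
        * (∑ k ∈ range (l+1), ((l+1).choose k : ℝ) * (pBernoulli k p : ℝ))
        * bernoulliPolyR (n-l) y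
      = (if l = 0 then bernoulliPolyR n y
          else -(p:ℝ) * ((n.choose l : ℝ) * bernoulliPolyR (n-l) y * (pBernoulli l p : ℝ) / ((l:ℝ)+1))) := by
    intro l _
    by_cases h : l = 0
    · subst h
      simp only [if_true]
      rw [Finset.sum_range_one]
      have hpb0 : (pBernoulli 0 p : ℝ) = 1 := by norm_num [pBernoulli]
      simp [hpb0]
    · simp only [h, if_false]
      have hl1 : 1 ≤ l := by omega
      rw [hq l, pB_sum l p hl1]
      push_cast
      ring
  rw [Finset.sum_congr rfl main]
  rw [Finset.sum_range_succ' (fun l => if l = 0 then bernoulliPolyR n y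
      else -(p:ℝ) * ((n.choose l : ℝ) * bernoulliPolyR (n-l) y * (pBernoulli l p : ℝ) / ((l:ℝ)+1))) n]
  rw [Finset.sum_range_succ' (fun k => (n.choose k : ℝ) * bernoulliPolyR (n - k) y
      * (pBernoulli k p : ℝ) / ((k:ℝ) + 1)) n]
  have hpb0 : (pBernoulli 0 p : ℝ) = 1 := by norm_num [pBernoulli]
  have hg0 : (n.choose 0 : ℝ) * bernoulliPolyR (n - 0) y * (pBernoulli 0 p : ℝ) / (((0:ℕ):ℝ) + 1)
      = bernoulliPolyR n y := by
    simp [hpb0]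
  have terms : ∀ l ∈ range n,
      (if (l+1) = 0 then bernoulliPolyR n y
        else -(p:ℝ) * ((n.choose (l+1) : ℝ) * bernoulliPolyR (n-(l+1)) y * (pBernoulli (l+1) p : ℝ)
            / ((((l+1):ℕ):ℝ)+1)))
      = -((p:ℝ) * ((n.choose (l+1) : ℝ) * bernoulliPolyR (n - (l+1)) y
          * (pBernoulli (l+1) p : ℝ) / ((((l+1):ℕ):ℝ) + 1))) := by
    intro l _
    simp only [Nat.succ_ne_zero, if_false]
    ring
  rw [Finset.sum_congr rfl terms, hg0, Finset.sum_neg_distrib, ← Finset.mul_sum]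
  norm_num
  try ring

theorem pBernoulliPoly_raabe (n p m : ℕ) (hm : 1 ≤ m) (x : ℝ) :
    (m : ℝ) ^ ((n : ℤ) - 1) * ∑ k ∈ Finset.range m, pBernoulliPoly n p (x + k / m)
      = (p + 1 : ℝ) * bernoulliPolyR n (m * x)
        - (p : ℝ) * ∑ k ∈ Finset.range (n + 1),
            (n.choose k : ℝ) * (m : ℝ) ^ k * bernoulliPolyR (n - k) (m * x)
              * (pBernoulli k p : ℝ) / (k + 1) := by
  have hm0 : (m:ℝ) ≠ 0 := by positivity
  have e1 : ∀ k : ℕ, pBernoulliPoly n p (x + (k:ℝ)/(m:ℝ))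
      = ((p:ℝ) + 1) * bernoulliPolyR n (x + (k:ℝ)/(m:ℝ))
        - (p : ℝ) * ∑ j ∈ range (n + 1),
            (n.choose j : ℝ) * bernoulliPolyR (n - j) (x + (k:ℝ)/(m:ℝ)) * (pBernoulli j p : ℝ) / ((j:ℝ) + 1) :=
    fun k => pB_struct n p _
  have expand : ∑ k ∈ range m, pBernoulliPoly n p (x + (k:ℝ)/(m:ℝ))
      = ((p:ℝ)+1) * (∑ k ∈ range m, bernoulliPolyR n (x+(k:ℝ)/m))
        - (p:ℝ) * ∑ j ∈ range (n+1), ∑ k ∈ range m,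
            (n.choose j : ℝ) * bernoulliPolyR (n - j) (x + (k:ℝ)/(m:ℝ)) * (pBernoulli j p : ℝ) / ((j:ℝ) + 1) := by
    rw [Finset.sum_congr rfl (fun k _ => e1 k), Finset.sum_sub_distrib, ← Finset.mul_sum,
      ← Finset.mul_sum, Finset.sum_comm]
  have part2 : ∀ j ∈ range (n+1),
      (m:ℝ) ^ ((n:ℤ)-1) * ∑ k ∈ range m,
          (n.choose j : ℝ) * bernoulliPolyR (n - j) (x + (k:ℝ)/m) * (pBernoulli j p : ℝ) / ((j:ℝ) + 1)
      = (n.choose j : ℝ) * (m : ℝ) ^ j * bernoulliPolyR (n - j) (m * x)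
          * (pBernoulli j p : ℝ) / ((j:ℝ) + 1) := by
    intro j hj
    simp only [mem_range] at hj
    have hjn : j ≤ n := by omega
    have hz : ((n:ℤ)-1) = (j:ℤ) + (((n-j:ℕ):ℤ) - 1) := by
      push_cast [Nat.cast_sub hjn]
      ring
    have hsplit : (m:ℝ) ^ ((n:ℤ)-1) = (m:ℝ)^j * (m:ℝ)^(((n-j:ℕ):ℤ)-1) := by
      rw [hz, zpow_add₀ hm0, zpow_natCast]
    have hraabe2 := raabe (n-j) m hm x
    calc (m:ℝ) ^ ((n:ℤ)-1) * ∑ k ∈ range m,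
          (n.choose j : ℝ) * bernoulliPolyR (n - j) (x + (k:ℝ)/m) * (pBernoulli j p : ℝ) / ((j:ℝ) + 1)
        = ((n.choose j : ℝ) * (m:ℝ)^j * (pBernoulli j p : ℝ) / ((j:ℝ) + 1))
            * ((m:ℝ)^(((n-j:ℕ):ℤ)-1) * ∑ k ∈ range m, bernoulliPolyR (n - j) (x + (k:ℝ)/m)) := by
          rw [hsplit, Finset.mul_sum, Finset.mul_sum, Finset.mul_sum]
          refine Finset.sum_congr rfl fun k _ => ?_
          ring
      _ = (n.choose j : ℝ) * (m : ℝ) ^ j * bernoulliPolyR (n - j) (m * x)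
            * (pBernoulli j p : ℝ) / ((j:ℝ) + 1) := by
          rw [hraabe2]
          ring
  have part1 := raabe n m hm x
  calc (m : ℝ) ^ ((n : ℤ) - 1) * ∑ k ∈ Finset.range m, pBernoulliPoly n p (x + (k:ℝ) / m)
      = ((p:ℝ)+1) * ((m : ℝ) ^ ((n : ℤ) - 1) * ∑ k ∈ range m, bernoulliPolyR n (x+(k:ℝ)/m))
        - (p:ℝ) * ∑ j ∈ range (n+1), ((m:ℝ) ^ ((n:ℤ)-1) * ∑ k ∈ range m,
            (n.choose j : ℝ) * bernoulliPolyR (n - j) (x + (k:ℝ)/(m:ℝ)) * (pBernoulli j p : ℝ) / ((j:ℝ) + 1)) := by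
        rw [expand, mul_sub]
        congr 1
        · ring
        · rw [mul_left_comm]
          congr 1
          exact Finset.mul_sum _ _ _
    _ = (p + 1 : ℝ) * bernoulliPolyR n (m * x)
        - (p : ℝ) * ∑ k ∈ Finset.range (n + 1),
            (n.choose k : ℝ) * (m : ℝ) ^ k * bernoulliPolyR (n - k) (m * x)
              * (pBernoulli k p : ℝ) / ((k:ℝ) + 1) := by
        rw [part1, Finset.sum_congr rfl part2]
end

section
/- For m ≥ 1 and n ≥ 0: ∑_{k=0}^{n} C(n,k) · m^k · B_{k+1} · B_{n-k} / (k+1) = (-m·B_n - B_{n+1})/m + m^{n-1} · ∑_{k=0}^{m-1} (k/m) · B_n(k/m). -/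
open Finset

private lemma tri_swap {M : Type*} [AddCommMonoid M] (N : ℕ) (f : ℕ → ℕ → M) :
    ∑ j ∈ range N, ∑ i ∈ range (N - j), f j i
      = ∑ i ∈ range N, ∑ j ∈ range (N - i), f j i := by
  rw [Finset.sum_sigma', Finset.sum_sigma']
  refine Finset.sum_nbij' (fun x => ⟨x.2, x.1⟩) (fun x => ⟨x.2, x.1⟩) ?_ ?_
    (fun _ _ => rfl) (fun _ _ => rfl) (fun _ _ => rfl) <;>
    simp only [Finset.mem_sigma, Finset.mem_range, Sigma.forall] <;> omega

private lemma inner_pos_step (r s : ℕ) : ∀ j ∈ range (s + 1),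
      ((r + s).choose j : ℚ) * bernoulli j * (((r + s + 2 - j).choose (r + 1) : ℕ) : ℚ)
          / ((r + s + 2 - j : ℕ) : ℚ)
        = (((r + s + 1).choose r : ℚ) / (((r : ℚ) + 1) * ((r : ℚ) + (s : ℚ) + 1)))
            * ((((r : ℚ) + s + 1 - j) * (((s + 1).choose j : ℕ) : ℚ)) * bernoulli j) := by
    intro j hj
    rw [mem_range, Nat.lt_succ_iff] at hj
    have e1 : r + s + 2 - j = (r + s + 1 - j) + 1 := by omega
    have h1 : (r + s + 1 - j + 1) * (r + s + 1 - j).choose r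
        = (r + s + 1 - j + 1).choose (r + 1) * (r + 1) := Nat.add_one_mul_choose_eq _ _
    rw [← e1] at h1
    have h2 : (r + s).choose j * (r + s + 1) = (r + s + 1).choose j * (r + s + 1 - j) :=
      Nat.choose_mul_succ_eq (r + s) j
    have h3 : (r + s + 1).choose j * (r + s + 1 - j).choose r
        = (r + s + 1).choose r * (s + 1).choose j := by
      have t1 := Nat.choose_mul (n := r + s + 1) (k := r + s + 1 - j) (s := r)
        (by omega)
      rw [show r + s + 1 - r = s + 1 by omega, show r + s + 1 - j - r = s + 1 - j by omega,
        Nat.choose_symm (show j ≤ s + 1 by omega)] at t1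
      rw [← Nat.choose_symm (show j ≤ r + s + 1 by omega)]
      exact t1
    have hD : ((r + s + 2 - j : ℕ) : ℚ) ≠ 0 := by
      have : 0 < r + s + 2 - j := by omega
      positivity
    have cX : ((r + s + 1 - j : ℕ) : ℚ) = (r : ℚ) + s + 1 - j := by
      have h : j ≤ r + s + 1 := by omega
      push_cast [h]; ring
    have qh1 : ((r + s + 2 - j : ℕ) : ℚ) * ((r + s + 1 - j).choose r : ℚ)
        = (((r + s + 2 - j).choose (r + 1) : ℕ) : ℚ) * ((r : ℚ) + 1) := by
      exact_mod_cast congrArg (Nat.cast : ℕ → ℚ) h1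
    have qh2 : ((r + s).choose j : ℚ) * ((r : ℚ) + s + 1)
        = ((r + s + 1).choose j : ℚ) * ((r + s + 1 - j : ℕ) : ℚ) := by
      exact_mod_cast congrArg (Nat.cast : ℕ → ℚ) h2
    have qh3 : ((r + s + 1).choose j : ℚ) * ((r + s + 1 - j).choose r : ℚ)
        = ((r + s + 1).choose r : ℚ) * ((s + 1).choose j : ℚ) := by
      exact_mod_cast congrArg (Nat.cast : ℕ → ℚ) h3
    have key : ((r + s).choose j : ℚ) * (((r + s + 2 - j).choose (r + 1) : ℕ) : ℚ)
          * ((r : ℚ) + 1) * ((r : ℚ) + s + 1)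
        = ((r + s + 1).choose r : ℚ) * (((s + 1).choose j : ℕ) : ℚ)
          * ((r + s + 1 - j : ℕ) : ℚ) * ((r + s + 2 - j : ℕ) : ℚ) := by
      linear_combination (-(((r + s).choose j : ℚ) * ((r : ℚ) + s + 1))) * qh1
        + (((r + s + 2 - j : ℕ) : ℚ) * ((r + s + 1 - j).choose r : ℚ)) * qh2
        + (((r + s + 2 - j : ℕ) : ℚ) * ((r + s + 1 - j : ℕ) : ℚ)) * qh3
    rw [← cX, div_mul_eq_mul_div, div_eq_div_iff hD (by positivity)]
    linear_combination bernoulli j * key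

private lemma inner_pos (r s : ℕ) :
    ∑ j ∈ range (s + 1),
        ((r + s).choose j : ℚ) * bernoulli j * (((r + s + 2 - j).choose (r + 1) : ℕ) : ℚ)
          / ((r + s + 2 - j : ℕ) : ℚ)
      = ((r + s).choose (r + 1) : ℚ) * bernoulli s / ((s : ℕ) : ℚ)
        + (if s = 1 then 1 else 0) + (if s = 0 then 1 else 0) := by
  have qh4 : ((r + s + 1).choose r : ℚ) * ((s : ℚ) + 1) * (s : ℚ)
      = ((r + s).choose (r + 1) : ℚ) * ((r : ℚ) + 1) * ((r : ℚ) + s + 1) := by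
    have b1 : (r + s + 1).choose (r + 1) * (r + 1) = (r + s + 1).choose r * (s + 1) := by
      have := Nat.choose_succ_right_eq (r + s + 1) r
      rwa [show r + s + 1 - r = s + 1 by omega] at this
    have b2 : (r + s).choose (r + 1) * (r + s + 1) = (r + s + 1).choose (r + 1) * s := by
      have := Nat.choose_mul_succ_eq (r + s) (r + 1)
      rwa [show r + s + 1 - (r + 1) = s by omega] at this
    have qb1 : ((r + s + 1).choose (r + 1) : ℚ) * ((r : ℚ) + 1)
        = ((r + s + 1).choose r : ℚ) * ((s : ℚ) + 1) := by exact_mod_cast congrArg (Nat.cast : ℕ → ℚ) b1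
    have qb2 : ((r + s).choose (r + 1) : ℚ) * ((r : ℚ) + s + 1)
        = ((r + s + 1).choose (r + 1) : ℚ) * (s : ℚ) := by
      have := congrArg (Nat.cast : ℕ → ℚ) b2; push_cast at this; linear_combination this
    linear_combination (-(s : ℚ)) * qb1 - ((r : ℚ) + 1) * qb2
  rw [Finset.sum_congr rfl (inner_pos_step r s), ← Finset.mul_sum]
  have split : ∀ j ∈ range (s + 1),
      (((r : ℚ) + s + 1 - j) * (((s + 1).choose j : ℕ) : ℚ)) * bernoulli j
        = ((s : ℚ) + 1) * ((s.choose j : ℚ) * bernoulli j)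
          + (r : ℚ) * (((s + 1).choose j : ℚ) * bernoulli j) := by
    intro j hj
    rw [mem_range, Nat.lt_succ_iff] at hj
    have h : s.choose j * (s + 1) = (s + 1).choose j * (s + 1 - j) := Nat.choose_mul_succ_eq s j
    have qh : (s.choose j : ℚ) * ((s : ℚ) + 1) = ((s + 1).choose j : ℚ) * ((s : ℚ) + 1 - j) := by
      have cX : ((s + 1 - j : ℕ) : ℚ) = (s : ℚ) + 1 - j := by push_cast [show j ≤ s + 1 by omega]; ring
      rw [← cX]; exact_mod_cast congrArg (Nat.cast : ℕ → ℚ) h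
    linear_combination (-(bernoulli j)) * qh
  rw [Finset.sum_congr rfl split, Finset.sum_add_distrib, ← Finset.mul_sum, ← Finset.mul_sum]
  rw [sum_bernoulli, Finset.sum_range_succ, sum_bernoulli, Nat.choose_self]
  match s with
  | 0 =>
      have : ((r : ℚ) + 1) ≠ 0 := by positivity
      simp [Nat.choose_succ_self]
      field_simp
      ring
  | 1 =>
      have h1 : ((r : ℚ) + 1) ≠ 0 := by positivity
      have h2 : ((r : ℚ) + 2) ≠ 0 := by positivity
      norm_num [bernoulli_one] at qh4 ⊢
      field_simp
      linear_combination qh4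
  | (s + 2) =>
      have h1 : ((r : ℚ) + 1) ≠ 0 := by positivity
      have h2 : ((r : ℚ) + (s : ℚ) + 3) ≠ 0 := by positivity
      have h3 : ((s : ℚ) + 2) ≠ 0 := by positivity
      norm_num at qh4 ⊢
      push_cast at qh4 ⊢
      field_simp
      linear_combination bernoulli (s + 2) * qh4

private lemma inner_zero (n : ℕ) :
    ∑ j ∈ range (n + 2), (n.choose j : ℚ) * bernoulli j * (((n + 2 - j).choose 0 : ℕ) : ℚ)
        / ((n + 2 - j : ℕ) : ℚ)
      = (n.choose 0 : ℚ) * bernoulli (n + 1 - 0) / ((n + 1 - 0 : ℕ) : ℚ)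
        + (if 0 = n then 1 else 0) + (if 0 = n + 1 then 1 else 0) := by
  have hQ1 : ((n : ℚ) + 1) ≠ 0 := by positivity
  have hQ2 : ((n : ℚ) + 2) ≠ 0 := by positivity
  have hstep : ∀ j ∈ range (n + 2),
      (n.choose j : ℚ) * bernoulli j * (((n + 2 - j).choose 0 : ℕ) : ℚ) / ((n + 2 - j : ℕ) : ℚ)
        = (1 / (((n : ℚ) + 1) * ((n : ℚ) + 2)))
            * ((((n : ℚ) + 1 - j) * ((n + 2).choose j : ℚ)) * bernoulli j) := by
    intro j hj
    rw [mem_range, Nat.lt_succ_iff] at hj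
    have h2 : n.choose j * (n + 1) = (n + 1).choose j * (n + 1 - j) := Nat.choose_mul_succ_eq n j
    have h2' : (n + 1).choose j * (n + 2) = (n + 2).choose j * (n + 2 - j) := Nat.choose_mul_succ_eq (n + 1) j
    have hD : ((n + 2 - j : ℕ) : ℚ) ≠ 0 := by
      have : 0 < n + 2 - j := by omega
      positivity
    have cX : ((n + 1 - j : ℕ) : ℚ) = (n : ℚ) + 1 - j := by push_cast [show j ≤ n + 1 by omega]; ring
    have qh2 : (n.choose j : ℚ) * ((n : ℚ) + 1) = ((n + 1).choose j : ℚ) * ((n + 1 - j : ℕ) : ℚ) := by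
      exact_mod_cast congrArg (Nat.cast : ℕ → ℚ) h2
    have qh2' : ((n + 1).choose j : ℚ) * ((n : ℚ) + 2) = ((n + 2).choose j : ℚ) * ((n + 2 - j : ℕ) : ℚ) := by
      exact_mod_cast congrArg (Nat.cast : ℕ → ℚ) h2'
    rw [Nat.choose_zero_right, ← cX, one_div, inv_mul_eq_div,
      div_eq_div_iff hD (by positivity)]
    push_cast
    linear_combination (bernoulli j * ((n : ℚ) + 2)) * qh2
      + (bernoulli j * ((n + 1 - j : ℕ) : ℚ)) * qh2'
  rw [Finset.sum_congr rfl hstep, ← Finset.mul_sum]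
  have split : ∀ j ∈ range (n + 2),
      (((n : ℚ) + 1 - j) * ((n + 2).choose j : ℚ)) * bernoulli j
        = ((n : ℚ) + 2) * (((n + 1).choose j : ℚ) * bernoulli j)
          - (((n + 2).choose j : ℚ) * bernoulli j) := by
    intro j hj
    rw [mem_range, Nat.lt_succ_iff] at hj
    have h : (n + 1).choose j * (n + 2) = (n + 2).choose j * (n + 2 - j) := Nat.choose_mul_succ_eq (n + 1) j
    have cX : ((n + 2 - j : ℕ) : ℚ) = (n : ℚ) + 2 - j := by push_cast [show j ≤ n + 2 by omega]; ring
    have qh : ((n + 1).choose j : ℚ) * ((n : ℚ) + 2) = ((n + 2).choose j : ℚ) * ((n : ℚ) + 2 - j) := by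
      rw [← cX]; exact_mod_cast congrArg (Nat.cast : ℕ → ℚ) h
    linear_combination (-(bernoulli j)) * qh
  rw [Finset.sum_congr rfl split, Finset.sum_sub_distrib, ← Finset.mul_sum]
  rw [sum_bernoulli, Finset.sum_range_succ, sum_bernoulli, Nat.choose_self]
  match n with
  | 0 => norm_num [bernoulli_one]
  | (n + 1) =>
      have h1 : ((n : ℚ) + 2) ≠ 0 := by positivity
      norm_num
      rw [if_neg (by omega : ¬ (n + 1 + 2 = 1))]
      have h2 : ((n : ℚ) + 3) ≠ 0 := by positivity
      field_simp
      ring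

private lemma inner_eval (n i : ℕ) (hi : i < n + 2) :
    ∑ j ∈ range (n + 2 - i), (n.choose j : ℚ) * bernoulli j * (((n + 2 - j).choose i : ℕ) : ℚ)
        / ((n + 2 - j : ℕ) : ℚ)
      = (n.choose i : ℚ) * bernoulli (n + 1 - i) / ((n + 1 - i : ℕ) : ℚ)
        + (if i = n then 1 else 0) + (if i = n + 1 then 1 else 0) := by
  match i with
  | 0 => exact inner_zero n
  | (r + 1) =>
      obtain ⟨s, rfl⟩ : ∃ s, n = r + s := ⟨n - r, by omega⟩
      rw [show r + s + 2 - (r + 1) = s + 1 by omega, show r + s + 1 - (r + 1) = s by omega]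
      rw [inner_pos r s]
      congr 1
      · congr 1
        exact if_congr (by omega) rfl rfl
      · exact if_congr (by omega) rfl rfl

private lemma Tform (n m : ℕ) (hm : 1 ≤ m) :
    (m : ℚ) ^ ((n : ℤ) - 1) * ∑ k ∈ range m,
        ((k : ℚ) / m) * Polynomial.eval ((k : ℚ) / m) (Polynomial.bernoulli n)
      = ∑ l ∈ range (n + 2), bernoulli l * (m : ℚ) ^ ((n : ℤ) - l) *
          ∑ j ∈ range (n + 2 - l),
            (n.choose j : ℚ) * bernoulli j * (((n + 2 - j).choose l : ℕ) : ℚ)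
              / ((n + 2 - j : ℕ) : ℚ) := by
  have hm0 : (m : ℚ) ≠ 0 := by positivity
  have heval : ∀ k : ℕ, Polynomial.eval ((k : ℚ) / m) (Polynomial.bernoulli n)
      = ∑ i ∈ range (n + 1), bernoulli i * (n.choose i : ℚ) * ((k : ℚ) / m) ^ (n - i) := by
    intro k
    rw [Polynomial.bernoulli, Polynomial.eval_finset_sum]
    exact Finset.sum_congr rfl fun i _ => by rw [Polynomial.eval_monomial]
  have e1 : (m : ℚ) ^ ((n : ℤ) - 1) * ∑ k ∈ range m,
        ((k : ℚ) / m) * Polynomial.eval ((k : ℚ) / m) (Polynomial.bernoulli n)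
      = ∑ i ∈ range (n + 1), (bernoulli i * (n.choose i : ℚ) * (m : ℚ) ^ ((i : ℤ) - 2))
          * ∑ k ∈ range m, (k : ℚ) ^ (n - i + 1) := by
    rw [Finset.mul_sum]
    rw [Finset.sum_congr rfl fun k _ => ?_, Finset.sum_comm]
    · exact Finset.sum_congr rfl fun i _ => by rw [← Finset.mul_sum]
    · rw [heval k, Finset.mul_sum, Finset.mul_sum]
      refine Finset.sum_congr rfl fun i hi => ?_
      rw [mem_range, Nat.lt_succ_iff] at hi
      have hzp : (m : ℚ) ^ ((n : ℤ) - 1)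
          = (m : ℚ) ^ (n - i + 1 : ℕ) * (m : ℚ) ^ ((i : ℤ) - 2) := by
        rw [← zpow_natCast (m : ℚ) (n - i + 1), ← zpow_add₀ hm0]
        congr 1
        omega
      rw [hzp, div_pow]
      field_simp
      ring
  rw [e1]
  have e2 : ∀ i ∈ range (n + 1),
      (bernoulli i * (n.choose i : ℚ) * (m : ℚ) ^ ((i : ℤ) - 2))
          * ∑ k ∈ range m, (k : ℚ) ^ (n - i + 1)
        = ∑ l ∈ range (n + 2 - i),
            bernoulli i * (n.choose i : ℚ) * bernoulli l * (((n + 2 - i).choose l : ℕ) : ℚ)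
              * (m : ℚ) ^ ((n : ℤ) - l) / ((n + 2 - i : ℕ) : ℚ) := by
    intro i hi
    rw [mem_range, Nat.lt_succ_iff] at hi
    rw [sum_range_pow m (n - i + 1)]
    rw [show n - i + 1 + 1 = n + 2 - i by omega]
    rw [Finset.mul_sum]
    refine Finset.sum_congr rfl fun l hl => ?_
    rw [mem_range] at hl
    have hzp : (m : ℚ) ^ ((i : ℤ) - 2) * (m : ℚ) ^ (n + 2 - i - l : ℕ)
        = (m : ℚ) ^ ((n : ℤ) - l) := by
      rw [← zpow_natCast (m : ℚ) (n + 2 - i - l), ← zpow_add₀ hm0]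
      congr 1
      omega
    have hc : ((n - i + 1 : ℕ) : ℚ) + 1 = ((n + 2 - i : ℕ) : ℚ) := by
      push_cast [hi, show i ≤ n + 2 by omega]
      ring
    rw [← hc]
    field_simp
    rw [← hzp]
    ring
  rw [Finset.sum_congr rfl e2]
  have e3 : ∑ i ∈ range (n + 2), ∑ l ∈ range (n + 2 - i),
        bernoulli i * (n.choose i : ℚ) * bernoulli l * (((n + 2 - i).choose l : ℕ) : ℚ)
          * (m : ℚ) ^ ((n : ℤ) - l) / ((n + 2 - i : ℕ) : ℚ)
      = ∑ i ∈ range (n + 1), ∑ l ∈ range (n + 2 - i),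
        bernoulli i * (n.choose i : ℚ) * bernoulli l * (((n + 2 - i).choose l : ℕ) : ℚ)
          * (m : ℚ) ^ ((n : ℤ) - l) / ((n + 2 - i : ℕ) : ℚ) := by
    rw [Finset.sum_range_succ]
    simp [Nat.choose_succ_self]
  rw [← e3, tri_swap (n + 2)]
  refine Finset.sum_congr rfl fun l hl => ?_
  rw [Finset.mul_sum]
  refine Finset.sum_congr rfl fun j hj => ?_
  ring

theorem bernoulli_convolution (n m : ℕ) (hm : 1 ≤ m) :
    ∑ k ∈ Finset.range (n + 1),
        (n.choose k : ℚ) * (m : ℚ) ^ k * bernoulli (k + 1) * bernoulli (n - k) / (k + 1)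
      = (-(m : ℚ) * bernoulli n - bernoulli (n + 1)) / m
        + (m : ℚ) ^ ((n : ℤ) - 1) * ∑ k ∈ Finset.range m,
            ((k : ℚ) / m) * Polynomial.eval ((k : ℚ) / m) (Polynomial.bernoulli n) := by
  have hm0 : (m : ℚ) ≠ 0 := Nat.cast_ne_zero.mpr (by omega)
  rw [Tform n m hm]
  have hsum : ∑ l ∈ range (n + 2), bernoulli l * (m : ℚ) ^ ((n : ℤ) - l) *
          ∑ j ∈ range (n + 2 - l),
            (n.choose j : ℚ) * bernoulli j * (((n + 2 - j).choose l : ℕ) : ℚ)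
              / ((n + 2 - j : ℕ) : ℚ)
      = ∑ l ∈ range (n + 2), bernoulli l * (m : ℚ) ^ ((n : ℤ) - l)
          * ((n.choose l : ℚ) * bernoulli (n + 1 - l) / ((n + 1 - l : ℕ) : ℚ)
            + (if l = n then 1 else 0) + (if l = n + 1 then 1 else 0)) :=
    Finset.sum_congr rfl (fun l hl => by rw [inner_eval n l (Finset.mem_range.mp hl)])
  rw [hsum]
  have expand : ∀ l ∈ range (n + 2),
      bernoulli l * (m : ℚ) ^ ((n : ℤ) - l)
          * ((n.choose l : ℚ) * bernoulli (n + 1 - l) / ((n + 1 - l : ℕ) : ℚ)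
            + (if l = n then 1 else 0) + (if l = n + 1 then 1 else 0))
        = bernoulli l * (m : ℚ) ^ ((n : ℤ) - l)
            * ((n.choose l : ℚ) * bernoulli (n + 1 - l) / ((n + 1 - l : ℕ) : ℚ))
          + ((if l = n then bernoulli l * (m : ℚ) ^ ((n : ℤ) - l) else 0)
          + (if l = n + 1 then bernoulli l * (m : ℚ) ^ ((n : ℤ) - l) else 0)) := by
    intro l _
    split_ifs <;> ring
  rw [Finset.sum_congr rfl expand, Finset.sum_add_distrib, Finset.sum_add_distrib,
    Finset.sum_ite_eq' (range (n + 2)) n (fun l => bernoulli l * (m : ℚ) ^ ((n : ℤ) - l)),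
    Finset.sum_ite_eq' (range (n + 2)) (n + 1) (fun l => bernoulli l * (m : ℚ) ^ ((n : ℤ) - l)),
    if_pos (mem_range.mpr (by omega)), if_pos (mem_range.mpr (by omega))]
  have en : (m : ℚ) ^ ((n : ℤ) - (n : ℕ)) = 1 := by
    rw [show (n : ℤ) - (n : ℕ) = 0 by omega, zpow_zero]
  have en1 : (m : ℚ) ^ ((n : ℤ) - ((n + 1 : ℕ) : ℤ)) = (m : ℚ)⁻¹ := by
    rw [show (n : ℤ) - ((n + 1 : ℕ) : ℤ) = -1 by omega, zpow_neg_one]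
  rw [en, en1]
  have eS1 : ∑ l ∈ range (n + 2), bernoulli l * (m : ℚ) ^ ((n : ℤ) - l)
          * ((n.choose l : ℚ) * bernoulli (n + 1 - l) / ((n + 1 - l : ℕ) : ℚ))
      = ∑ l ∈ range (n + 1), bernoulli l * (m : ℚ) ^ ((n : ℤ) - l)
          * ((n.choose l : ℚ) * bernoulli (n + 1 - l) / ((n + 1 - l : ℕ) : ℚ)) := by
    rw [Finset.sum_range_succ]
    simp [Nat.choose_succ_self]
  rw [eS1]
  have eL : ∑ k ∈ Finset.range (n + 1),
        (n.choose k : ℚ) * (m : ℚ) ^ k * bernoulli (k + 1) * bernoulli (n - k) / (k + 1)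
      = ∑ l ∈ range (n + 1), bernoulli l * (m : ℚ) ^ ((n : ℤ) - l)
          * ((n.choose l : ℚ) * bernoulli (n + 1 - l) / ((n + 1 - l : ℕ) : ℚ)) := by
    rw [← Finset.sum_range_reflect]
    refine Finset.sum_congr rfl fun l hl => ?_
    rw [mem_range, Nat.lt_succ_iff] at hl
    rw [show n + 1 - 1 - l = n - l by omega, Nat.choose_symm hl,
      show n - (n - l) = l by omega, show n - l + 1 = n + 1 - l by omega]
    have hp : (m : ℚ) ^ (n - l : ℕ) = (m : ℚ) ^ ((n : ℤ) - l) := by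
      rw [← zpow_natCast (m : ℚ) (n - l)]
      congr 1
      omega
    rw [hp]
    have hc : ((n + 1 - l : ℕ) : ℚ) = ((n - l : ℕ) : ℚ) + 1 := by
      push_cast [show l ≤ n + 1 by omega, hl]
      ring
    rw [hc]
    ring
  rw [eL]
  field_simp
  ring
end
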